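/- arXiv:1908.09814 — 8 statements merged into one kernel-verified Lean document; each statement's English description precedes it below -/
import Mathlib

section
/- Let n ≥ 1, let X ⊆ ℝⁿ be a nonempty closed set, and let p ∈ ℝⁿ \ X. Then the distance function d_X is (Fréchet) differentiable at p if and only if p has a unique nearest point in X (i.e., there is exactly one x⁰ ∈ X with ‖p − x⁰‖ = d_X(p)). -/
open Metric Set Filter
open scoped RealInnerProductSpace Topology

/-- The norm has Fréchet derivative `‖a‖⁻¹ • ⟪a, ·⟫` at any nonzero point `a` of a real
inner product space. -/
lemma aux_hasFDerivAt_norm_of_ne {E : Type*} [NormedAddCommGroup E] [InnerProductSpace ℝ E]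
    {a : E} (ha : a ≠ 0) :
    HasFDerivAt (fun x : E => ‖x‖) (‖a‖⁻¹ • innerSL ℝ a) a := by
  have h1 : HasFDerivAt (fun x : E => ‖x‖ ^ 2) (2 • innerSL ℝ a) a := by
    simpa using (hasFDerivAt_id a).norm_sq
  have h2 : HasDerivAt Real.sqrt (1 / (2 * Real.sqrt (‖a‖ ^ 2))) (‖a‖ ^ 2) :=
    Real.hasDerivAt_sqrt (by simpa using (norm_ne_zero_iff.2 ha))
  have h3 := h2.comp_hasFDerivAt a h1
  have hna : Real.sqrt (‖a‖ ^ 2) = ‖a‖ := Real.sqrt_sq (norm_nonneg a)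
  have heq : (Real.sqrt ∘ fun x : E => ‖x‖ ^ 2) = fun x : E => ‖x‖ := by
    funext x; simp [Function.comp, Real.sqrt_sq, norm_nonneg]
  rw [heq] at h3
  refine h3.congr_fderiv ?_
  rw [hna]
  ext y
  have : ‖a‖ ≠ 0 := norm_ne_zero_iff.2 ha
  simp [smul_smul]
  field_simp

set_option maxHeartbeats 1000000 in
/-- For a nonempty closed set `X ⊆ ℝⁿ` and a point `p ∉ X`, the distance
function `d_X` is (Fréchet) differentiable at `p` if and only if `p` has a unique nearest
point in `X`. -/
theorem distance_function_differentiable_iff_unique_footprint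
    (n : ℕ) (hn : 1 ≤ n) (X : Set (EuclideanSpace ℝ (Fin n))) (hXne : X.Nonempty)
    (hXcl : IsClosed X) (p : EuclideanSpace ℝ (Fin n)) (hp : p ∉ X) :
    DifferentiableAt ℝ (fun q => Metric.infDist q X) p ↔
      ∃! x₀, x₀ ∈ X ∧ ‖p - x₀‖ = Metric.infDist p X := by
  have hd0 : 0 < Metric.infDist p X := (hXcl.notMem_iff_infDist_pos hXne).1 hp
  obtain ⟨x₀, hx₀X, hx₀d⟩ := hXcl.exists_infDist_eq_dist hXne p
  -- hx₀d : infDist p X = dist p x₀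
  constructor
  · -- differentiable → unique nearest point
    intro hdiff
    have hLnorm : ‖fderiv ℝ (fun q => Metric.infDist q X) p‖ ≤ 1 := by
      simpa using norm_fderiv_le_of_lipschitz ℝ
        (f := fun q => Metric.infDist q X) (x₀ := p) (Metric.lipschitz_infDist_pt X)
    set L := fderiv ℝ (fun q => Metric.infDist q X) p with hL
    -- the derivative in the direction of any nearest point
    have key : ∀ x, x ∈ X → dist p x = Metric.infDist p X →
        L (x - p) = -(Metric.infDist p X) := by
      intro x hxX hxd
      have hγ : HasDerivAt (fun t : ℝ => p + t • (x - p)) (x - p) 0 := by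
        simpa using ((hasDerivAt_id (0 : ℝ)).smul_const (x - p)).const_add p
      have hcomp : HasDerivAt (fun t : ℝ => Metric.infDist (p + t • (x - p)) X)
          (L (x - p)) 0 := by
        have := (hdiff.hasFDerivAt.comp_hasDerivAt_of_eq 0 hγ (by simp))
        exact this
      have heq : ∀ t ∈ Set.Icc (0 : ℝ) 1,
          Metric.infDist (p + t • (x - p)) X = (1 - t) * Metric.infDist p X := by
        intro t ht
        have hub : Metric.infDist (p + t • (x - p)) X ≤ (1 - t) * Metric.infDist p X := by
          calc Metric.infDist (p + t • (x - p)) X ≤ dist (p + t • (x - p)) x :=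
                Metric.infDist_le_dist_of_mem hxX
          _ = ‖(1 - t) • (p - x)‖ := by rw [dist_eq_norm]; congr 1; module
          _ = (1 - t) * Metric.infDist p X := by
                rw [norm_smul, Real.norm_eq_abs, abs_of_nonneg (by linarith [ht.2]),
                  ← dist_eq_norm, hxd]
        have hdist : dist p (p + t • (x - p)) = t * Metric.infDist p X := by
          rw [dist_eq_norm]
          have h9 : p - (p + t • (x - p)) = t • (p - x) := by module
          rw [h9, norm_smul, Real.norm_eq_abs, abs_of_nonneg ht.1, ← dist_eq_norm, hxd]
        have hlb := Metric.infDist_le_infDist_add_dist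
          (x := p) (y := p + t • (x - p)) (s := X)
        rw [hdist] at hlb
        linarith
      have hmem : (fun t : ℝ => Metric.infDist (p + t • (x - p)) X)
          =ᶠ[nhdsWithin 0 (Set.Ici 0)] (fun t => (1 - t) * Metric.infDist p X) := by
        filter_upwards [self_mem_nhdsWithin,
          nhdsWithin_le_nhds (Iio_mem_nhds one_pos)] with t ht1 ht2
        exact heq t ⟨ht1, le_of_lt ht2⟩
      have hlin : HasDerivWithinAt (fun t : ℝ => (1 - t) * Metric.infDist p X)
          (-(Metric.infDist p X)) (Set.Ici 0) 0 := by
        simpa using (((hasDerivAt_id (0 : ℝ)).const_sub 1).mul_const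
          (Metric.infDist p X)).hasDerivWithinAt
      have h2 : HasDerivWithinAt (fun t : ℝ => Metric.infDist (p + t • (x - p)) X)
          (-(Metric.infDist p X)) (Set.Ici 0) 0 :=
        hlin.congr_of_eventuallyEq hmem (by simp)
      have hud : UniqueDiffWithinAt ℝ (Set.Ici (0 : ℝ)) 0 :=
        uniqueDiffOn_Ici 0 0 Set.self_mem_Ici
      rw [← hcomp.hasDerivWithinAt.derivWithin hud, h2.derivWithin hud]
    -- now prove uniqueness
    refine ⟨x₀, ⟨hx₀X, by rw [← dist_eq_norm, ← hx₀d]⟩, ?_⟩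
    rintro y ⟨hyX, hyn⟩
    have hyd : dist p y = Metric.infDist p X := by rw [dist_eq_norm, hyn]
    set d := Metric.infDist p X with hdDef
    have hv : L (x₀ - p) = -d := key x₀ hx₀X hx₀d.symm
    have hw : L (y - p) = -d := key y hyX hyd
    have hnv : ‖x₀ - p‖ = d := by rw [norm_sub_rev, ← dist_eq_norm, ← hx₀d]
    have hnw : ‖y - p‖ = d := by rw [norm_sub_rev, hyn]
    have hsum : L ((y - p) + (x₀ - p)) = -(2 * d) := by
      rw [map_add, hv, hw]; ring
    have hub : ‖(y - p) + (x₀ - p)‖ ≤ 2 * d := by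
      calc ‖(y - p) + (x₀ - p)‖ ≤ ‖y - p‖ + ‖x₀ - p‖ := norm_add_le _ _
      _ = 2 * d := by rw [hnv, hnw]; ring
    have hlb : 2 * d ≤ ‖(y - p) + (x₀ - p)‖ := by
      have h1 : ‖L ((y - p) + (x₀ - p))‖ ≤ ‖L‖ * ‖(y - p) + (x₀ - p)‖ :=
        L.le_opNorm _
      have h2 : ‖L‖ * ‖(y - p) + (x₀ - p)‖ ≤ 1 * ‖(y - p) + (x₀ - p)‖ :=
        mul_le_mul_of_nonneg_right hLnorm (norm_nonneg _)
      have h3 : ‖L ((y - p) + (x₀ - p))‖ = 2 * d := by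
        rw [hsum, Real.norm_eq_abs, abs_neg, abs_of_nonneg (by linarith)]
      linarith
    have hinner : ⟪y - p, x₀ - p⟫ = ‖y - p‖ * ‖x₀ - p‖ := by
      have hsq := norm_add_sq_real (y - p) (x₀ - p)
      have heqn : ‖(y - p) + (x₀ - p)‖ = 2 * d := le_antisymm hub hlb
      rw [heqn, hnv, hnw] at hsq
      rw [hnv, hnw]
      nlinarith
    have hpar : ‖x₀ - p‖ • (y - p) = ‖y - p‖ • (x₀ - p) :=
      inner_eq_norm_mul_iff_real.1 hinner
    rw [hnv, hnw] at hpar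
    have h9 : y - p = x₀ - p := smul_right_injective _ (ne_of_gt hd0) hpar
    exact sub_left_inj.1 h9
  · -- unique nearest point → differentiable
    rintro ⟨z₀, ⟨hzX, hzn⟩, huniq⟩
    have hpz : p - z₀ ≠ 0 := sub_ne_zero.2 (by rintro rfl; exact hp hzX)
    set L : EuclideanSpace ℝ (Fin n) →L[ℝ] ℝ := ‖p - z₀‖⁻¹ • innerSL ℝ (p - z₀) with hLdef
    have hg : HasFDerivAt (fun q : EuclideanSpace ℝ (Fin n) => ‖q - z₀‖) L p := by
      have h1 := aux_hasFDerivAt_norm_of_ne hpz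
      have h2 : HasFDerivAt (fun q : EuclideanSpace ℝ (Fin n) => q - z₀)
          (ContinuousLinearMap.id ℝ _) p := (hasFDerivAt_id p).sub_const z₀
      have h3 := h1.comp p h2
      rw [ContinuousLinearMap.comp_id] at h3
      exact h3
    choose xq hxqX hxqd using fun q => hXcl.exists_infDist_eq_dist hXne q
    have hxqp : ∀ q, p - xq q ≠ 0 := by
      intro q
      refine sub_ne_zero.2 fun h => hp ?_
      rw [h]; exact hxqX q
    -- continuity of the nearest point at p
    have hconv : Filter.Tendsto xq (𝓝 p) (𝓝 z₀) := by
      rw [Metric.tendsto_nhds_nhds]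
      by_contra hcon
      push_neg at hcon
      obtain ⟨ε, hε, hcon⟩ := hcon
      choose q hq1 hq2 using fun k : ℕ => hcon (1 / (k + 1)) (by positivity)
      have hqp : Filter.Tendsto q Filter.atTop (𝓝 p) := by
        refine tendsto_iff_dist_tendsto_zero.2 ?_
        refine squeeze_zero (fun k => dist_nonneg) (fun k => (hq1 k).le) ?_
        exact tendsto_one_div_add_atTop_nhds_zero_nat
      have hone : ∀ k : ℕ, (1 : ℝ) / (k + 1) ≤ 1 := by
        intro k
        rw [div_le_one (by positivity)]
        simp
      have hmemball : ∀ k, xq (q k) ∈ Metric.closedBall p (Metric.infDist p X + 2) := by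
        intro k
        have hA : Metric.infDist (q k) X ≤ Metric.infDist p X + dist (q k) p :=
          Metric.infDist_le_infDist_add_dist
        have hB : dist (xq (q k)) p ≤ dist (xq (q k)) (q k) + dist (q k) p :=
          dist_triangle _ _ _
        have hC : dist (xq (q k)) (q k) = Metric.infDist (q k) X := by
          rw [dist_comm, ← hxqd]
        have := hq1 k
        have := hone k
        simp only [Metric.mem_closedBall]
        linarith
      obtain ⟨a, -, φ, hφ, hay⟩ :=
        (isCompact_closedBall p (Metric.infDist p X + 2)).tendsto_subseq hmemball
      have haX : a ∈ X := hXcl.mem_of_tendsto hay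
        (Filter.Eventually.of_forall fun k => hxqX _)
      have hqφ : Filter.Tendsto (fun k => q (φ k)) Filter.atTop (𝓝 p) :=
        hqp.comp hφ.tendsto_atTop
      have hda : dist p a = Metric.infDist p X := by
        have t1 : Filter.Tendsto (fun k => dist (q (φ k)) (xq (q (φ k))))
            Filter.atTop (𝓝 (dist p a)) := hqφ.dist hay
        have t2 : Filter.Tendsto (fun k => dist (q (φ k)) (xq (q (φ k))))
            Filter.atTop (𝓝 (Metric.infDist p X)) := by
          have := ((Metric.continuous_infDist_pt X).tendsto p).comp hqφ
          exact this.congr fun k => hxqd _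
        exact tendsto_nhds_unique t1 t2
      have haz : a = z₀ := huniq a ⟨haX, by rw [← dist_eq_norm, hda]⟩
      have hlim : Filter.Tendsto (fun k => dist (xq (q (φ k))) z₀)
          Filter.atTop (𝓝 0) := by
        have := hay.dist (tendsto_const_nhds (x := z₀) (f := Filter.atTop (α := ℕ)))
        rw [haz, dist_self] at this
        exact this
      have := ge_of_tendsto hlim (Filter.Eventually.of_forall fun k => hq2 (φ k))
      linarith
    -- convergence of the unit vectors
    have hvconv : Filter.Tendsto (fun q' => ‖p - xq q'‖⁻¹ • (p - xq q')) (𝓝 p)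
        (𝓝 (‖p - z₀‖⁻¹ • (p - z₀))) := by
      have h1 : Filter.Tendsto (fun q' => p - xq q') (𝓝 p) (𝓝 (p - z₀)) :=
        tendsto_const_nhds.sub hconv
      exact (h1.norm.inv₀ (norm_ne_zero_iff.2 hpz)).smul h1
    -- the main estimate
    have hmain : HasFDerivAt (fun q => Metric.infDist q X) L p := by
      refine HasFDerivAt.of_isLittleO (Asymptotics.isLittleO_iff.2 fun c hc => ?_)
      have E1 := Asymptotics.isLittleO_iff.1 hg.isLittleO hc
      have E2 : ∀ᶠ q' in 𝓝 p,
          dist (‖p - xq q'‖⁻¹ • (p - xq q')) (‖p - z₀‖⁻¹ • (p - z₀)) < c :=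
        Metric.tendsto_nhds.1 hvconv c hc
      filter_upwards [E1, E2] with q hq1 hq2
      rw [Real.norm_eq_abs, abs_le]
      have hL8 : L (q - p) = ⟪‖p - z₀‖⁻¹ • (p - z₀), q - p⟫ := by
        rw [hLdef, real_inner_smul_left]
        simp only [ContinuousLinearMap.smul_apply, innerSL_apply_apply, smul_eq_mul]
      constructor
      · -- lower bound
        set x := xq q with hxdef
        set v := ‖p - x‖⁻¹ • (p - x) with hvdef
        set u := ‖p - z₀‖⁻¹ • (p - z₀) with hudef
        have hnx : ‖p - x‖ ≠ 0 := norm_ne_zero_iff.2 (hxqp q)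
        have hv1 : ‖v‖ = 1 := by
          rw [hvdef, norm_smul, Real.norm_eq_abs, abs_of_nonneg
            (inv_nonneg.2 (norm_nonneg _)), inv_mul_cancel₀ hnx]
        have s1 : Metric.infDist q X = ‖q - x‖ := by rw [hxqd q, dist_eq_norm]
        have s2 : ⟪v, q - x⟫ ≤ ‖q - x‖ := by
          have := real_inner_le_norm v (q - x)
          rw [hv1, one_mul] at this
          exact this
        have s3 : ⟪v, q - x⟫ = ⟪v, p - x⟫ + ⟪v, q - p⟫ := by
          have h9 : q - x = (p - x) + (q - p) := by abel
          rw [h9, inner_add_right]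
        have s4 : ⟪v, p - x⟫ = ‖p - x‖ := by
          rw [hvdef, real_inner_smul_left, real_inner_self_eq_norm_sq]
          field_simp
        have s5 : Metric.infDist p X ≤ ‖p - x‖ := by
          rw [← dist_eq_norm]
          exact Metric.infDist_le_dist_of_mem (hxqX q)
        have s6 : ⟪v, q - p⟫ = ⟪u, q - p⟫ + ⟪v - u, q - p⟫ := by
          rw [← inner_add_left]; congr 1; abel
        have s7 : -(c * ‖q - p‖) ≤ ⟪v - u, q - p⟫ := by
          have h9 : |⟪v - u, q - p⟫| ≤ ‖v - u‖ * ‖q - p‖ :=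
            abs_real_inner_le_norm _ _
          have h10 : ‖v - u‖ ≤ c := by
            rw [← dist_eq_norm]; exact hq2.le
          have h11 : ‖v - u‖ * ‖q - p‖ ≤ c * ‖q - p‖ :=
            mul_le_mul_of_nonneg_right h10 (norm_nonneg _)
          have := neg_abs_le ⟪v - u, q - p⟫
          linarith
        rw [hL8]
        linarith
      · -- upper bound
        have t1 : Metric.infDist q X ≤ ‖q - z₀‖ := by
          rw [← dist_eq_norm]
          exact Metric.infDist_le_dist_of_mem hzX
        have t2 : Metric.infDist p X = ‖p - z₀‖ := hzn.symm
        have t3 : ‖q - z₀‖ - ‖p - z₀‖ - L (q - p) ≤ c * ‖q - p‖ := by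
          have := le_abs_self (‖q - z₀‖ - ‖p - z₀‖ - L (q - p))
          rw [← Real.norm_eq_abs] at this
          exact this.trans hq1
        linarith
    exact hmain.differentiableAt
end

section
/- Let n ≥ 1, let X ⊆ ℝⁿ be a nonempty closed set, and let p ∈ ℝⁿ \ X. If d_X is differentiable at p, then p has a unique nearest point p⁰ in X and the gradient satisfies ∇d_X(p) = (p − p⁰)/‖p − p⁰‖; in particular ‖∇d_X(p)‖ = 1. -/
open Metric InnerProductSpace

/-- Auxiliary: if `f = infDist · X` has gradient `g` at `p`, and `y` is a nearest point of `p`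
in `X`, then `⟪g, y - p⟫ = -‖p - y‖`. -/
theorem aux_inner_grad
    {E : Type*} [NormedAddCommGroup E] [InnerProductSpace ℝ E] [CompleteSpace E]
    (X : Set E) (p : E) (g : E)
    (hG : HasGradientAt (fun q => Metric.infDist q X) g p)
    (y : E) (hyX : y ∈ X) (hnear : ‖p - y‖ = Metric.infDist p X) :
    inner ℝ g (y - p) = -‖p - y‖ := by
  set d : ℝ := ‖p - y‖ with hd
  set f : E → ℝ := fun q => Metric.infDist q X with hf
  -- value of f along the segment
  have hseg : ∀ t ∈ Set.Icc (0:ℝ) 1, f (p + t • (y - p)) = (1 - t) * d := by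
    rintro t ⟨ht0, ht1⟩
    have hdistp : dist p (p + t • (y - p)) = t * d := by
      rw [dist_eq_norm]
      have : p - (p + t • (y - p)) = t • (p - y) := by
        rw [smul_sub, smul_sub]; abel
      rw [this, norm_smul, Real.norm_eq_abs, abs_of_nonneg ht0]
    have hdisty : dist (p + t • (y - p)) y = (1 - t) * d := by
      rw [dist_eq_norm]
      have : p + t • (y - p) - y = (1 - t) • (p - y) := by
        rw [sub_smul, one_smul, smul_sub, smul_sub]; abel
      rw [this, norm_smul, Real.norm_eq_abs, abs_of_nonneg (by linarith)]
    have hle : f (p + t • (y - p)) ≤ (1 - t) * d :=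
      hdisty ▸ Metric.infDist_le_dist_of_mem hyX
    have hge : (1 - t) * d ≤ f (p + t • (y - p)) := by
      have h1 : f p ≤ f (p + t • (y - p)) + dist p (p + t • (y - p)) :=
        Metric.infDist_le_infDist_add_dist
      have h2 : d = f p := hnear
      rw [hdistp] at h1
      nlinarith
    linarith
  -- derivative of f along the segment at 0
  have hγ : HasDerivAt (fun t : ℝ => p + t • (y - p)) (y - p) 0 := by
    simpa using ((hasDerivAt_id (0:ℝ)).smul_const (y - p)).const_add p
  have hφ : HasDerivAt (fun t : ℝ => f (p + t • (y - p))) (inner ℝ g (y - p)) 0 := by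
    have hF : HasFDerivAt f (toDual ℝ E g) ((fun t : ℝ => p + t • (y - p)) 0) := by
      simpa using hG.hasFDerivAt
    have := hF.comp_hasDerivAt (0 : ℝ) hγ
    simp only [toDual_apply_apply] at this
    exact this
  -- compare with the explicit formula on [0,1]
  have hφ' : HasDerivWithinAt (fun t : ℝ => (1 - t) * d) (inner ℝ g (y - p))
      (Set.Icc (0:ℝ) 1) 0 := by
    refine (hφ.hasDerivWithinAt).congr ?_ ?_
    · intro t ht; exact (hseg t ht).symm
    · exact (hseg 0 (by norm_num)).symm
  have hψ : HasDerivWithinAt (fun t : ℝ => (1 - t) * d) (-d) (Set.Icc (0:ℝ) 1) 0 := by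
    have : HasDerivAt (fun t : ℝ => (1 - t) * d) (-d) 0 := by
      simpa using (((hasDerivAt_id (0:ℝ)).const_sub 1).mul_const d)
    exact this.hasDerivWithinAt
  have huniq : UniqueDiffWithinAt ℝ (Set.Icc (0:ℝ) 1) 0 :=
    uniqueDiffOn_Icc one_pos 0 (by norm_num)
  have h1 := hφ'.derivWithin huniq
  have h2 := hψ.derivWithin huniq
  rw [← h1]; exact h2

/-- If the distance function of a nonempty closed set `X ⊆ ℝⁿ` is
differentiable at `p ∉ X`, then `p` has a unique nearest point `p₀` in `X`, and the gradient
of the distance function at `p` is `(p - p₀)/‖p - p₀‖`; in particular it has norm one. -/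
theorem gradient_of_distance_function
    (n : ℕ) (hn : 1 ≤ n) (X : Set (EuclideanSpace ℝ (Fin n))) (hXne : X.Nonempty)
    (hXcl : IsClosed X) (p : EuclideanSpace ℝ (Fin n)) (hp : p ∉ X)
    (hdiff : DifferentiableAt ℝ (fun q => Metric.infDist q X) p) :
    ∃ p₀, (p₀ ∈ X ∧ ‖p - p₀‖ = Metric.infDist p X) ∧
      (∀ y, (y ∈ X ∧ ‖p - y‖ = Metric.infDist p X) → y = p₀) ∧
      gradient (fun q => Metric.infDist q X) p = ‖p - p₀‖⁻¹ • (p - p₀) ∧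
      ‖gradient (fun q => Metric.infDist q X) p‖ = 1 := by
  set f : EuclideanSpace ℝ (Fin n) → ℝ := fun q => Metric.infDist q X with hf
  set g := gradient f p with hg
  have hG : HasGradientAt f g p := hdiff.hasGradientAt
  have hdpos : 0 < Metric.infDist p X := (hXcl.notMem_iff_infDist_pos hXne).mp hp
  obtain ⟨p₀, hp₀X, hp₀d⟩ := hXcl.exists_infDist_eq_dist hXne p
  have hnorm₀ : ‖p - p₀‖ = Metric.infDist p X := by rw [hp₀d, dist_eq_norm]
  -- norm of gradient ≤ 1
  have hlip : LipschitzWith 1 f := Metric.lipschitz_infDist_pt X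
  have hgle : ‖g‖ ≤ 1 := by
    have h1 := norm_fderiv_le_of_lipschitz (x₀ := p) ℝ hlip
    have : ‖g‖ = ‖fderiv ℝ f p‖ := by
      rw [hg, gradient]
      exact (LinearIsometryEquiv.norm_map (toDual ℝ _).symm (fderiv ℝ f p))
    rw [this]; simpa using h1
  -- key: for any nearest point y, d • g = p - y
  have key : ∀ y, y ∈ X → ‖p - y‖ = Metric.infDist p X →
      (Metric.infDist p X) • g = p - y ∧ ‖g‖ = 1 := by
    intro y hyX hynear
    have hinner : inner ℝ g (y - p) = -‖p - y‖ := aux_inner_grad X p g hG y hyX hynear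
    have hinner' : inner ℝ g (p - y) = ‖p - y‖ := by
      have h := hinner
      rw [← neg_sub p y, inner_neg_right] at h
      linarith
    have hgnorm : ‖g‖ = 1 := by
      have hcs : inner ℝ g (p - y) ≤ ‖g‖ * ‖p - y‖ := real_inner_le_norm g (p - y)
      rw [hinner'] at hcs
      have hd0 : 0 < ‖p - y‖ := by rw [hynear]; exact hdpos
      nlinarith
    have heq : inner ℝ g (p - y) = ‖g‖ * ‖p - y‖ := by rw [hinner', hgnorm, one_mul]
    have := inner_eq_norm_mul_iff_real.mp heq
    rw [hgnorm, one_smul] at this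
    constructor
    · rw [← hynear]; exact this
    · exact hgnorm
  obtain ⟨hkey₀, hgnorm⟩ := key p₀ hp₀X hnorm₀
  refine ⟨p₀, ⟨hp₀X, hnorm₀⟩, ?_, ?_, hgnorm⟩
  · rintro y ⟨hyX, hynear⟩
    have h1 := (key y hyX hynear).1
    have h2 : p - y = p - p₀ := by rw [← h1, hkey₀]
    have := sub_right_injective h2
    exact (neg_injective (by simpa [neg_sub] using h2) : y = p₀)
  · have hd0 : (Metric.infDist p X) ≠ 0 := ne_of_gt hdpos
    rw [hnorm₀, ← hkey₀, smul_smul, inv_mul_cancel₀ hd0, one_smul]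
end

section
/- Let n ≥ 1, let X ⊆ ℝⁿ be a nonempty closed set, and let U ⊆ ℝⁿ \ X be an open set such that d_X is differentiable at every point of U. Then d_X is continuously differentiable (of class C¹) on U. -/
open Metric Set Filter InnerProductSpace
open scoped Topology RealInnerProductSpace

/-- At a differentiability point `p ∉ X`, every nearest point of `p` in `X` is given by the
explicit formula involving the (Riesz representative of the) derivative. -/
lemma nearest_eq_of_diff {n : ℕ} {X : Set (EuclideanSpace ℝ (Fin n))}
    (hXne : X.Nonempty) (hXcl : IsClosed X) {p : EuclideanSpace ℝ (Fin n)} (hp : p ∉ X)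
    (hd : DifferentiableAt ℝ (fun q => infDist q X) p)
    {x : EuclideanSpace ℝ (Fin n)} (hx : x ∈ X) (hxd : dist p x = infDist p X) :
    x = p - (infDist p X) •
      ((toDual ℝ (EuclideanSpace ℝ (Fin n))).symm (fderiv ℝ (fun q => infDist q X) p)) := by
  set f : EuclideanSpace ℝ (Fin n) → ℝ := fun q => infDist q X with hf
  set D : ℝ := infDist p X with hDdef
  have hD : 0 < D := (hXcl.notMem_iff_infDist_pos hXne).1 hp
  have hxp : ‖x - p‖ = D := by
    rw [← hxd, dist_eq_norm, ← norm_neg]; congr 1; abel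
  set u : EuclideanSpace ℝ (Fin n) := D⁻¹ • (x - p) with hu
  have hunorm : ‖u‖ = 1 := by
    rw [hu, norm_smul, hxp, norm_inv, Real.norm_of_nonneg hD.le,
      inv_mul_cancel₀ hD.ne']
  have hDu : D • u = x - p := by
    rw [hu, smul_smul, mul_inv_cancel₀ hD.ne', one_smul]
  set L := fderiv ℝ f p with hL
  -- the function equals `D - t` along the segment towards `x`
  have hseg : ∀ t ∈ Icc (0:ℝ) D, f (p + t • u) = D - t := by
    intro t ht
    have hle : f (p + t • u) ≤ D - t := by
      have h1 : f (p + t • u) ≤ dist (p + t • u) x := infDist_le_dist_of_mem hx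
      have h2 : p + t • u - x = (t - D) • u := by
        rw [sub_smul, hDu]; abel
      have : dist (p + t • u) x = D - t := by
        rw [dist_eq_norm, h2, norm_smul, hunorm, mul_one, Real.norm_eq_abs,
          abs_of_nonpos (by linarith [ht.2])]
        ring
      linarith
    have hge : D - t ≤ f (p + t • u) := by
      have h1 : infDist p X ≤ infDist (p + t • u) X + dist p (p + t • u) :=
        infDist_le_infDist_add_dist
      have h2 : dist p (p + t • u) = t := by
        rw [dist_eq_norm, show p - (p + t • u) = (-t) • u by rw [neg_smul]; abel,
          norm_smul, hunorm, mul_one, Real.norm_eq_abs, abs_neg, abs_of_nonneg ht.1]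
      rw [h2] at h1
      linarith
    linarith
  -- the directional derivative of `f` at `p` along `u` is `-1`
  have hLu : L u = -1 := by
    have hline : HasDerivAt (fun t : ℝ => p + t • u) u 0 := by
      simpa using ((hasDerivAt_id (0:ℝ)).smul_const u).const_add p
    have hcomp : HasDerivAt (fun t : ℝ => f (p + t • u)) (L u) 0 := by
      have hfd : HasFDerivAt f L (p + (0:ℝ) • u) := by
        simpa using hd.hasFDerivAt
      exact hfd.comp_hasDerivAt 0 hline
    have h1 : HasDerivWithinAt (fun t : ℝ => f (p + t • u)) (L u) (Ioi 0) 0 :=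
      hcomp.hasDerivWithinAt
    have h2 : HasDerivWithinAt (fun t : ℝ => f (p + t • u)) (-1) (Ioi 0) 0 := by
      have hlin : HasDerivWithinAt (fun t : ℝ => D - t) (-1) (Ioi 0) 0 := by
        simpa using ((hasDerivAt_id (0:ℝ)).const_sub D).hasDerivWithinAt
      refine hlin.congr_of_eventuallyEq ?_ ?_
      · filter_upwards [Ioo_mem_nhdsGT_of_mem (by exact ⟨le_refl 0, hD⟩ : (0:ℝ) ∈ Ico 0 D)]
          with t ht
        exact hseg t ⟨ht.1.le, ht.2.le⟩
      · simpa using hseg 0 ⟨le_refl 0, hD.le⟩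
    have := (uniqueDiffWithinAt_Ioi (0:ℝ)).eq_deriv _ h1 h2
    simpa using this
  have hLnorm : ‖L‖ ≤ 1 := by
    simpa using norm_fderiv_le_of_lipschitz ℝ (lipschitz_infDist_pt X)
  set v := (toDual ℝ (EuclideanSpace ℝ (Fin n))).symm L with hv
  have hvu : ⟪v, u⟫_ℝ = -1 := by rw [hv, toDual_symm_apply, hLu]
  have hvnorm : ‖v‖ ≤ 1 := by rw [hv, LinearIsometryEquiv.norm_map]; exact hLnorm
  have hsum : ‖v + u‖ ^ 2 ≤ 0 := by
    rw [norm_add_sq_real, hvu, hunorm]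
    nlinarith [norm_nonneg v]
  have hveq : v = -u := by
    have h0 : ‖v + u‖ = 0 := by nlinarith [norm_nonneg (v + u)]
    have : v + u = 0 := norm_eq_zero.1 h0
    rw [eq_neg_iff_add_eq_zero]; exact this
  rw [hveq, smul_neg, sub_neg_eq_add, hDu]
  abel


/-- If the distance function of a nonempty closed set `X ⊆ ℝⁿ` is
differentiable at every point of an open set `U ⊆ ℝⁿ \ X`, then it is continuously
differentiable (of class `C¹`) on `U`. -/
theorem distance_function_C1_on_open_set
    (n : ℕ) (hn : 1 ≤ n) (X : Set (EuclideanSpace ℝ (Fin n))) (hXne : X.Nonempty)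
    (hXcl : IsClosed X) (U : Set (EuclideanSpace ℝ (Fin n))) (hUopen : IsOpen U)
    (hUX : U ⊆ Xᶜ)
    (hdiff : ∀ p ∈ U, DifferentiableAt ℝ (fun q => Metric.infDist q X) p) :
    ContDiffOn ℝ 1 (fun q => Metric.infDist q X) U := by
  set f : EuclideanSpace ℝ (Fin n) → ℝ := fun q => infDist q X with hf
  set Φ : EuclideanSpace ℝ (Fin n) → EuclideanSpace ℝ (Fin n) :=
    fun q => (toDual ℝ (EuclideanSpace ℝ (Fin n))).symm (fderiv ℝ f q) with hΦ
  -- continuity of `Φ` at each point of `U`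
  have hΦcont : ∀ p ∈ U, ContinuousAt Φ p := by
    intro p hp
    have hpD : 0 < infDist p X := (hXcl.notMem_iff_infDist_pos hXne).1 (hUX hp)
    apply tendsto_of_subseq_tendsto
    intro ns hns
    -- eventually the sequence is in `U`
    obtain ⟨N, hN⟩ := (eventually_atTop).1 (hns.eventually (hUopen.mem_nhds hp))
    set q : ℕ → EuclideanSpace ℝ (Fin n) := fun k => ns (k + N) with hq
    have hqU : ∀ k, q k ∈ U := fun k => hN _ (Nat.le_add_left N k)
    have hqp : Tendsto q atTop (𝓝 p) := hns.comp (tendsto_add_atTop_nat N)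
    -- nearest points to `q k`
    have hex : ∀ k, ∃ y ∈ X, infDist (q k) X = dist (q k) y := fun k =>
      hXcl.exists_infDist_eq_dist hXne (q k)
    choose x hxX hxdist using hex
    -- the nearest points are bounded
    have hdq : Tendsto (fun k => dist p (q k)) atTop (𝓝 0) := by
      simpa [dist_self] using (tendsto_const_nhds.dist hqp : Tendsto (fun k => dist p (q k)) atTop (𝓝 (dist p p)))
    obtain ⟨C, hC⟩ := hdq.bddAbove_range
    have hCmem : ∀ k, dist p (q k) ≤ C := fun k => hC ⟨k, rfl⟩
    set R : ℝ := C + (infDist p X + C) with hR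
    have hxball : ∀ k, x k ∈ closedBall p R ∩ X := by
      intro k
      refine ⟨?_, hxX k⟩
      rw [mem_closedBall, dist_comm]
      calc dist p (x k) ≤ dist p (q k) + dist (q k) (x k) := dist_triangle _ _ _
        _ ≤ C + (infDist p X + dist p (q k)) := by
            have h1 : dist (q k) (x k) = infDist (q k) X := (hxdist k).symm
            have h2 : infDist (q k) X ≤ infDist p X + dist (q k) p :=
              infDist_le_infDist_add_dist
            rw [dist_comm (q k) p] at h2
            rw [h1]; linarith [hCmem k]
        _ ≤ R := by rw [hR]; linarith [hCmem k]
    have hKcompact : IsCompact (closedBall p R ∩ X) :=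
      (isCompact_closedBall p R).inter_right hXcl
    obtain ⟨a, haK, φ, hφmono, hφtend⟩ := hKcompact.tendsto_subseq hxball
    -- `a` is a nearest point of `p`
    have hqφ : Tendsto (fun j => q (φ j)) atTop (𝓝 p) := hqp.comp hφmono.tendsto_atTop
    have hdista : dist p a = infDist p X := by
      have h1 : Tendsto (fun j => dist (q (φ j)) (x (φ j))) atTop (𝓝 (dist p a)) :=
        hqφ.dist hφtend
      have h2 : Tendsto (fun j => dist (q (φ j)) (x (φ j))) atTop (𝓝 (infDist p X)) := by
        have : Tendsto (fun j => infDist (q (φ j)) X) atTop (𝓝 (infDist p X)) :=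
          ((continuous_infDist_pt X).tendsto p).comp hqφ
        refine this.congr fun j => (hxdist (φ j))
      exact tendsto_nhds_unique h1 h2
    -- identify the limit of `Φ (q (φ j))`
    have hkey : ∀ k, Φ (q k) = (infDist (q k) X)⁻¹ • (q k - x k) := by
      intro k
      have hD : 0 < infDist (q k) X := (hXcl.notMem_iff_infDist_pos hXne).1 (hUX (hqU k))
      have := nearest_eq_of_diff hXne hXcl (hUX (hqU k)) (hdiff _ (hqU k)) (hxX k)
        (hxdist k).symm
      rw [this]
      rw [show q k - (q k - infDist (q k) X • Φ (q k)) = infDist (q k) X • Φ (q k) by abel,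
        smul_smul, inv_mul_cancel₀ hD.ne', one_smul]
    have hΦp : Φ p = (infDist p X)⁻¹ • (p - a) := by
      have := nearest_eq_of_diff hXne hXcl (hUX hp) (hdiff _ hp) haK.2 hdista
      rw [this, show p - (p - infDist p X • Φ p) = infDist p X • Φ p by abel,
        smul_smul, inv_mul_cancel₀ hpD.ne', one_smul]
    refine ⟨fun j => φ j + N, ?_⟩
    have htend : Tendsto (fun j => (infDist (q (φ j)) X)⁻¹ • (q (φ j) - x (φ j)))
        atTop (𝓝 ((infDist p X)⁻¹ • (p - a))) := by
      have hs : Tendsto (fun j => (infDist (q (φ j)) X)⁻¹) atTop (𝓝 (infDist p X)⁻¹) :=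
        (((continuous_infDist_pt X).tendsto p).comp hqφ).inv₀ hpD.ne'
      exact hs.smul (hqφ.sub hφtend)
    have : Tendsto (fun j => Φ (q (φ j))) atTop (𝓝 (Φ p)) := by
      rw [hΦp]
      exact htend.congr fun j => (hkey (φ j)).symm
    exact this
  -- conclude
  rw [show (1 : WithTop ℕ∞) = 0 + 1 from rfl,
    contDiffOn_succ_iff_fderiv_of_isOpen hUopen]
  refine ⟨fun p hp => ((hdiff p hp).differentiableWithinAt), by simp, ?_⟩
  rw [contDiffOn_zero]
  intro p hp
  have : ContinuousAt (fderiv ℝ f) p := by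
    have h1 : ContinuousAt (fun q => (toDual ℝ (EuclideanSpace ℝ (Fin n))) (Φ q)) p :=
      ((toDual ℝ (EuclideanSpace ℝ (Fin n))).continuous.continuousAt).comp (hΦcont p hp)
    simpa [hΦ] using h1
  exact this.continuousWithinAt
end

section
/- Let n ≥ 2 and let A be the n×n real symmetric matrix whose (n−1)×(n−1) leading principal submatrix is diagonal with diagonal entries b₁, …, b_{n−1}, whose last column (and row) has entries A_{in} = A_{ni} = a_i for i < n, and A_{nn} = a. Let Ā = (ā_{ij}) denote the cofactor matrix of A (so ā_{ij} is (−1)^{i+j} times the minor obtained by deleting row i and column j). Then: (i) ā_{in} = −a_i ∏_{ℓ<n, ℓ≠i} b_ℓ for i < n; (ii) ā_{ij} = a_i a_j ∏_{ℓ<n, ℓ≠i,j} b_ℓ for i, j < n with i ≠ j; (iii) ā_{ii} = a ∏_{ℓ<n, ℓ≠i} b_ℓ − Σ_{k<n, k≠i} a_k² ∏_{ℓ<n, ℓ≠k,i} b_ℓ for i < n; and (iv) det(A) = a ∏_{ℓ<n} b_ℓ − Σ_{k<n} a_k² ∏_{ℓ<n, ℓ≠k} b_ℓ. -/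
open Matrix Finset

set_option linter.unnecessarySeqFocus false

lemma myval_succAbove {n : ℕ} (p : Fin (n+1)) (k : Fin n) :
    ((p.succAbove k) : ℕ) = if (k:ℕ) < (p:ℕ) then (k:ℕ) else (k:ℕ)+1 := by
  rcases lt_or_ge (k.castSucc) p with h | h
  · rw [Fin.succAbove_of_castSucc_lt _ _ h]
    simp [Fin.lt_iff_val_lt_val] at h ⊢
    omega
  · rw [Fin.succAbove_of_le_castSucc _ _ h]
    simp [Fin.le_iff_val_le_val] at h ⊢
    omega

lemma mycs {n : ℕ} (a : Fin (n+1)) (k : Fin n) :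
    (a.castSucc).succAbove (k.castSucc) = (a.succAbove k).castSucc := by
  apply Fin.ext
  simp only [Fin.coe_castSucc, myval_succAbove]

lemma mycslast {n : ℕ} (a : Fin (n+1)) :
    (a.castSucc).succAbove (Fin.last n) = Fin.last (n+1) := by
  apply Fin.ext
  rw [myval_succAbove]
  have := a.isLt
  simp only [Fin.val_last, Fin.coe_castSucc]
  split_ifs <;> omega

lemma myimg {n : ℕ} (i : Fin (n+1)) :
    (univ : Finset (Fin n)).image i.succAbove = univ.erase i := by
  ext ℓ
  simp only [mem_image, mem_univ, true_and, mem_erase, and_true]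
  constructor
  · rintro ⟨k, rfl⟩; exact Fin.succAbove_ne i k
  · intro h; exact Fin.exists_succAbove_eq h

lemma myprod {n : ℕ} (i : Fin (n+1)) (f : Fin (n+1) → ℝ) :
    ∏ k : Fin n, f (i.succAbove k) = ∏ ℓ ∈ univ.erase i, f ℓ := by
  rw [← myimg, Finset.prod_image (fun x _ y _ h => Fin.succAbove_right_injective h)]

lemma lone {q : ℕ} (v : Fin (q+1)) (d : Fin q → ℝ) (r : Fin (q+1) → ℝ)
    (M : Matrix (Fin (q+1)) (Fin (q+1)) ℝ)
    (htop : ∀ (k : Fin q) (l : Fin (q+1)), M k.castSucc l = if v.succAbove k = l then d k else 0)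
    (hbot : ∀ l, M (Fin.last q) l = r l) :
    M.det = (-1)^(q + (v:ℕ)) * r v * ∏ k, d k := by
  rw [Matrix.det_succ_column M v]
  rw [Finset.sum_eq_single (Fin.last q)]
  · have h1 : M (Fin.last q) v = r v := hbot v
    have h2 : (M.submatrix (Fin.last q).succAbove v.succAbove) = Matrix.diagonal d := by
      ext k l
      simp only [Matrix.submatrix_apply, Fin.succAbove_last, Matrix.diagonal]
      rw [htop k (v.succAbove l)]
      simp [Fin.succAbove_right_inj]
    rw [h1, h2, Matrix.det_diagonal]
    simp [Fin.val_last]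
  · intro k _ hk
    obtain ⟨k', rfl⟩ : ∃ k' : Fin q, k'.castSucc = k := by
      rcases Fin.eq_castSucc_or_eq_last k with ⟨k', rfl⟩ | rfl
      · exact ⟨k', rfl⟩
      · exact absurd rfl hk
    rw [htop]
    rw [if_neg (Fin.succAbove_ne v k')]
    ring
  · intro h; exact absurd (mem_univ _) h

lemma erase_zero_prod {p : ℕ} (d : Fin (p+1) → ℝ) :
    ∏ ℓ ∈ univ.erase (0 : Fin (p+1)), d ℓ = ∏ ℓ : Fin p, d (Fin.succ ℓ) := by
  have h1 : (univ.erase (0 : Fin (p+1))) = (univ : Finset (Fin p)).image (Fin.succ) := by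
    rw [← Fin.succAbove_zero, myimg]
  rw [h1, Finset.prod_image (fun x _ y _ h => Fin.succ_injective p h)]

lemma erase_succ_prod {p : ℕ} (k : Fin p) (d : Fin (p+1) → ℝ) :
    ∏ ℓ ∈ univ.erase (Fin.succ k), d ℓ = d 0 * ∏ ℓ ∈ univ.erase k, d (Fin.succ ℓ) := by
  have h0 : (0 : Fin (p+1)) ∈ univ.erase (Fin.succ k) :=
    mem_erase.2 ⟨(Fin.succ_ne_zero k).symm, mem_univ _⟩
  rw [← Finset.mul_prod_erase _ _ h0]
  congr 1
  have h2 : (univ.erase (Fin.succ k)).erase 0 = (univ.erase (0 : Fin (p+1))).erase (Fin.succ k) := by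
    rw [Finset.erase_right_comm]
  have h1 : (univ.erase (0 : Fin (p+1))) = (univ : Finset (Fin p)).image (Fin.succ) := by
    rw [← Fin.succAbove_zero, myimg]
  rw [h2, h1, ← Finset.image_erase (Fin.succ_injective p),
    Finset.prod_image (fun x _ y _ h => Fin.succ_injective p h)]

lemma bord : ∀ (p : ℕ) (d c r : Fin p → ℝ) (s : ℝ) (M : Matrix (Fin (p+1)) (Fin (p+1)) ℝ),
    (∀ k l : Fin p, M k.castSucc l.castSucc = if k = l then d k else 0) →
    (∀ k : Fin p, M k.castSucc (Fin.last p) = c k) →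
    (∀ l : Fin p, M (Fin.last p) l.castSucc = r l) →
    (M (Fin.last p) (Fin.last p) = s) →
    M.det = s * ∏ k, d k - ∑ k, c k * r k * ∏ ℓ ∈ univ.erase k, d ℓ := by
  intro p
  induction p with
  | zero =>
    intro d c r s M _ _ _ hcorner
    rw [Matrix.det_fin_one]
    rw [show (Fin.last 0) = 0 from rfl] at hcorner
    rw [hcorner]; simp
  | succ p IH =>
    intro d c r s M htop hcol hrow hcorner
    rw [Matrix.det_succ_row_zero, Fin.sum_univ_succ]
    have hsum : ∑ j : Fin (p+1), (-1 : ℝ)^((Fin.succ j : Fin (p+2)) : ℕ) * M 0 (Fin.succ j) *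
        (M.submatrix Fin.succ (Fin.succ j).succAbove).det
        = (-1 : ℝ)^(p+1) * M 0 (Fin.last (p+1)) *
          (M.submatrix Fin.succ (Fin.last (p+1)).succAbove).det := by
      rw [Finset.sum_eq_single (Fin.last p)]
      · rw [Fin.succ_last]; norm_num
      · intro j _ hj
        obtain ⟨j', rfl⟩ : ∃ j' : Fin p, j'.castSucc = j := by
          rcases Fin.eq_castSucc_or_eq_last j with ⟨j', rfl⟩ | rfl
          · exact ⟨j', rfl⟩
          · exact absurd rfl hj
        have hz : M 0 (Fin.succ j'.castSucc) = 0 := by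
          rw [Fin.succ_castSucc]
          have h := htop 0 j'.succ
          rw [show ((0 : Fin (p+1)).castSucc) = (0 : Fin (p+2)) from rfl] at h
          rw [h, if_neg (Fin.succ_ne_zero j').symm]
        rw [hz]; ring
      · intro h; exact absurd (mem_univ _) h
    rw [hsum]
    have hM' : (M.submatrix Fin.succ ((0 : Fin (p+2)).succAbove)).det
        = s * ∏ k, d (Fin.succ k) - ∑ k, c (Fin.succ k) * r (Fin.succ k) *
            ∏ ℓ ∈ univ.erase k, d (Fin.succ ℓ) := by
      rw [Fin.succAbove_zero]
      apply IH
      · intro k l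
        simp only [Matrix.submatrix_apply, Fin.succ_castSucc]
        rw [htop]
        simp [Fin.succ_inj]
      · intro k
        simp only [Matrix.submatrix_apply, Fin.succ_castSucc, Fin.succ_last]
        exact hcol (Fin.succ k)
      · intro l
        simp only [Matrix.submatrix_apply, Fin.succ_castSucc, Fin.succ_last]
        exact hrow (Fin.succ l)
      · simp only [Matrix.submatrix_apply, Fin.succ_last]
        exact hcorner
    have hM'' : (M.submatrix Fin.succ (Fin.last (p+1)).succAbove).det
        = (-1 : ℝ)^(p + ((0 : Fin (p+1)) : ℕ)) * r 0 * ∏ k, d (Fin.succ k) := by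
      apply lone (0 : Fin (p+1)) (fun k => d (Fin.succ k)) (fun l => r l)
      · intro k l
        simp only [Matrix.submatrix_apply, Fin.succAbove_last, Fin.succ_castSucc,
          Fin.succAbove_zero]
        rw [htop]
        rfl
      · intro l
        simp only [Matrix.submatrix_apply, Fin.succAbove_last, Fin.succ_last]
        exact hrow l
    rw [hM', hM'']
    have e0 : M 0 0 = d 0 := by
      have h := htop 0 0
      simpa using h
    have hc0 : M 0 (Fin.last (p+1)) = c 0 := by
      have h := hcol 0
      simpa using h
    rw [e0, hc0]
    rw [Fin.prod_univ_succ d, Fin.sum_univ_succ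
      (fun k => c k * r k * ∏ ℓ ∈ univ.erase k, d ℓ), erase_zero_prod]
    simp only [erase_succ_prod]
    have key : ((-1 : ℝ))^(p+1) * (-1)^(p + ((0 : Fin (p+1)) : ℕ)) = -1 := by
      simp only [Fin.val_zero, Nat.add_zero, ← pow_add]
      rw [show p+1+p = 2*p+1 by omega, pow_succ, pow_mul]
      norm_num
    have expand : (-1 : ℝ)^(((0 : Fin (p+2))) : ℕ) = 1 := by norm_num
    rw [expand]
    have hsum2 : ∑ k : Fin p, c (Fin.succ k) * r (Fin.succ k) *
        (d 0 * ∏ ℓ ∈ univ.erase k, d (Fin.succ ℓ))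
        = d 0 * ∑ k : Fin p, c (Fin.succ k) * r (Fin.succ k) *
            ∏ ℓ ∈ univ.erase k, d (Fin.succ ℓ) := by
      rw [Finset.mul_sum]
      exact Finset.sum_congr rfl (fun k _ => by ring)
    rw [hsum2]
    set P := ∏ k : Fin p, d (Fin.succ k) with hP
    set X := ∑ k : Fin p, c (Fin.succ k) * r (Fin.succ k) *
        ∏ ℓ ∈ univ.erase k, d (Fin.succ ℓ) with hX
    linear_combination (c 0 * r 0 * P) * key

lemma mykey {q : ℕ} (i j : Fin (q+2)) (hij : i ≠ j) (k₀ l₀ : Fin (q+1))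
    (hk : i.succAbove k₀ = j) (hl : j.succAbove l₀ = i) (k : Fin q) :
    j.succAbove (l₀.succAbove k) = i.succAbove (k₀.succAbove k) := by
  have hij' : (i:ℕ) ≠ (j:ℕ) := fun h => hij (Fin.ext h)
  have hk' := congrArg Fin.val hk
  have hl' := congrArg Fin.val hl
  rw [myval_succAbove] at hk' hl'
  apply Fin.ext
  rw [myval_succAbove, myval_succAbove, myval_succAbove, myval_succAbove]
  split_ifs at * <;> omega

lemma myvalsum {q : ℕ} (i j : Fin (q+2)) (hij : i ≠ j) (k₀ l₀ : Fin (q+1))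
    (hk : i.succAbove k₀ = j) (hl : j.succAbove l₀ = i) :
    (k₀:ℕ) + (l₀:ℕ) + 1 = (i:ℕ) + (j:ℕ) := by
  have hij' : (i:ℕ) ≠ (j:ℕ) := fun h => hij (Fin.ext h)
  have hk' := congrArg Fin.val hk
  have hl' := congrArg Fin.val hl
  rw [myval_succAbove] at hk' hl'
  split_ifs at * <;> omega

lemma bord2 {q : ℕ} (i j : Fin (q+2)) (hij : i ≠ j) (b' c' : Fin (q+2) → ℝ)
    (M : Matrix (Fin (q+2)) (Fin (q+2)) ℝ)
    (htop : ∀ k l : Fin (q+1), M k.castSucc l.castSucc =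
      if i.succAbove k = j.succAbove l then b' (i.succAbove k) else 0)
    (hcol : ∀ k : Fin (q+1), M k.castSucc (Fin.last (q+1)) = c' (i.succAbove k))
    (hrow : ∀ l : Fin (q+1), M (Fin.last (q+1)) l.castSucc = c' (j.succAbove l)) :
    M.det = (-1)^((i:ℕ)+(j:ℕ)) * (c' i * c' j * ∏ ℓ ∈ (univ.erase i).erase j, b' ℓ) := by
  obtain ⟨k₀, hk⟩ := Fin.exists_succAbove_eq hij.symm
  obtain ⟨l₀, hl⟩ := Fin.exists_succAbove_eq hij
  rw [Matrix.det_succ_row M k₀.castSucc]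
  rw [Finset.sum_eq_single (Fin.last (q+1))]
  · have h1 : M k₀.castSucc (Fin.last (q+1)) = c' j := by rw [hcol, hk]
    have h2 : (M.submatrix k₀.castSucc.succAbove (Fin.last (q+1)).succAbove).det
        = (-1)^(q + (l₀:ℕ)) * c' i * ∏ k, b' (i.succAbove (k₀.succAbove k)) := by
      have := lone l₀ (fun k => b' (i.succAbove (k₀.succAbove k)))
        (fun l => c' (j.succAbove l))
        (M.submatrix k₀.castSucc.succAbove (Fin.last (q+1)).succAbove) ?_ ?_
      · rw [this, hl]
      · intro k l
        simp only [Matrix.submatrix_apply, Fin.succAbove_last, mycs]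
        rw [htop]
        have hiff : (i.succAbove (k₀.succAbove k) = j.succAbove l) ↔ (l₀.succAbove k = l) := by
          rw [← mykey i j hij k₀ l₀ hk hl k, Fin.succAbove_right_inj]
        split_ifs with h1 h2 h2
        · rfl
        · exact absurd (hiff.mp h1) h2
        · exact absurd (hiff.mpr h2) h1
        · rfl
      · intro l
        simp only [Matrix.submatrix_apply, Fin.succAbove_last, mycslast]
        exact hrow l
    rw [h1, h2]
    have hprod : ∏ k, b' (i.succAbove (k₀.succAbove k))
        = ∏ ℓ ∈ (univ.erase i).erase j, b' ℓ := by
      rw [myprod k₀ (fun x => b' (i.succAbove x))]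
      have himg2 : Finset.image i.succAbove (univ.erase k₀) = (univ.erase i).erase j := by
        rw [Finset.image_erase Fin.succAbove_right_injective, myimg, hk]
      rw [← himg2, Finset.prod_image (fun x _ y _ h => Fin.succAbove_right_injective h)]
    rw [hprod]
    have hsign : ((-1:ℝ))^(((k₀.castSucc : Fin (q+2)):ℕ) + ((Fin.last (q+1) : Fin (q+2)):ℕ))
        * (-1)^(q + (l₀:ℕ)) = (-1)^((i:ℕ)+(j:ℕ)) := by
      rw [Fin.coe_castSucc, Fin.val_last, ← pow_add]
      have hv := myvalsum i j hij k₀ l₀ hk hl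
      rw [show (k₀:ℕ) + (q+1) + (q + (l₀:ℕ)) = (i:ℕ)+(j:ℕ) + 2*q by omega, pow_add, pow_mul]
      norm_num
    rw [← hsign]
    ring
  · intro l _ hl'
    obtain ⟨l', rfl⟩ : ∃ l'' : Fin (q+1), l''.castSucc = l := by
      rcases Fin.eq_castSucc_or_eq_last l with ⟨l'', rfl⟩ | rfl
      · exact ⟨l'', rfl⟩
      · exact absurd rfl hl'
    have hz : M k₀.castSucc l'.castSucc = 0 := by
      rw [htop, hk, if_neg (Fin.ne_succAbove j l')]
    rw [hz]; ring
  · intro h; exact absurd (mem_univ _) h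

/-- Cofactors and determinant of an `n × n` symmetric matrix (`n = m + 1 ≥ 2`)
whose leading `(n−1) × (n−1)` principal submatrix is diagonal with entries `b₁, …, b_{n−1}`,
whose last column/row has entries `a₁, …, a_{n−1}` and whose corner entry is `a`. -/
theorem cofactors_of_bordered_diagonal_matrix
    (m : ℕ) (hm : 1 ≤ m) (b avec : Fin m → ℝ) (a : ℝ)
    (A : Matrix (Fin (m + 1)) (Fin (m + 1)) ℝ)
    (hdiag : ∀ i j : Fin m, A i.castSucc j.castSucc = if i = j then b i else 0)
    (hcol : ∀ i : Fin m, A i.castSucc (Fin.last m) = avec i)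
    (hrow : ∀ j : Fin m, A (Fin.last m) j.castSucc = avec j)
    (hcorner : A (Fin.last m) (Fin.last m) = a)
    (cof : Matrix (Fin (m + 1)) (Fin (m + 1)) ℝ)
    (hcof : ∀ i j : Fin (m + 1), cof i j =
      (-1 : ℝ) ^ ((i : ℕ) + (j : ℕ)) * (A.submatrix i.succAbove j.succAbove).det) :
    (∀ i : Fin m,
      cof i.castSucc (Fin.last m) = -(avec i) * ∏ ℓ ∈ univ.erase i, b ℓ) ∧
    (∀ i j : Fin m, i ≠ j →
      cof i.castSucc j.castSucc = avec i * avec j * ∏ ℓ ∈ (univ.erase i).erase j, b ℓ) ∧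
    (∀ i : Fin m,
      cof i.castSucc i.castSucc = a * ∏ ℓ ∈ univ.erase i, b ℓ -
        ∑ k ∈ univ.erase i, (avec k) ^ 2 * ∏ ℓ ∈ (univ.erase k).erase i, b ℓ) ∧
    A.det = a * ∏ ℓ, b ℓ - ∑ k, (avec k) ^ 2 * ∏ ℓ ∈ univ.erase k, b ℓ := by
  obtain ⟨p, rfl⟩ : ∃ p, m = p + 1 := ⟨m - 1, (Nat.succ_pred_eq_of_pos hm).symm⟩
  refine ⟨?_, ?_, ?_, ?_⟩
  · -- part (i)
    intro i
    rw [hcof]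
    have hN : (A.submatrix (i.castSucc).succAbove (Fin.last (p+1)).succAbove).det
        = (-1)^(p + (i:ℕ)) * avec i * ∏ k, b (i.succAbove k) := by
      apply lone i (fun k => b (i.succAbove k)) avec
      · intro k l
        simp only [Matrix.submatrix_apply, Fin.succAbove_last, mycs]
        rw [hdiag]
      · intro l
        simp only [Matrix.submatrix_apply, Fin.succAbove_last, mycslast]
        exact hrow l
    rw [hN, myprod i b]
    have hsign : ((-1:ℝ))^(((i.castSucc : Fin (p+2)):ℕ) + ((Fin.last (p+1) : Fin (p+2)):ℕ))
        * (-1)^(p + (i:ℕ)) = -1 := by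
      rw [Fin.coe_castSucc, Fin.val_last, ← pow_add,
        show (i:ℕ) + (p+1) + (p + (i:ℕ)) = 2*((i:ℕ)+p)+1 by omega, pow_succ, pow_mul]
      norm_num
    calc ((-1:ℝ))^(((i.castSucc : Fin (p+2)):ℕ) + ((Fin.last (p+1) : Fin (p+2)):ℕ))
          * ((-1)^(p + (i:ℕ)) * avec i * ∏ ℓ ∈ univ.erase i, b ℓ)
        = (((-1:ℝ))^(((i.castSucc : Fin (p+2)):ℕ) + ((Fin.last (p+1) : Fin (p+2)):ℕ))
          * (-1)^(p + (i:ℕ))) * (avec i * ∏ ℓ ∈ univ.erase i, b ℓ) := by ring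
      _ = -(avec i) * ∏ ℓ ∈ univ.erase i, b ℓ := by rw [hsign]; ring
  · -- part (ii)
    intro i j hij
    rcases p with _ | q
    · exact absurd (Fin.ext (by omega : (i:ℕ) = (j:ℕ))) hij
    rw [hcof]
    have hN : (A.submatrix (i.castSucc).succAbove (j.castSucc).succAbove).det
        = (-1)^((i:ℕ)+(j:ℕ)) * (avec i * avec j * ∏ ℓ ∈ (univ.erase i).erase j, b ℓ) := by
      apply bord2 i j hij b avec
      · intro k l
        simp only [Matrix.submatrix_apply, mycs]
        rw [hdiag]
      · intro k
        simp only [Matrix.submatrix_apply, mycs, mycslast]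
        exact hcol (i.succAbove k)
      · intro l
        simp only [Matrix.submatrix_apply, mycs, mycslast]
        exact hrow (j.succAbove l)
    rw [hN, Fin.coe_castSucc, Fin.coe_castSucc, ← mul_assoc, ← pow_add,
      show (i:ℕ)+(j:ℕ)+((i:ℕ)+(j:ℕ)) = 2*((i:ℕ)+(j:ℕ)) by omega, pow_mul]
    norm_num
  · -- part (iii)
    intro i
    rw [hcof]
    have hN : (A.submatrix (i.castSucc).succAbove (i.castSucc).succAbove).det
        = a * ∏ k, b (i.succAbove k) - ∑ k, avec (i.succAbove k) * avec (i.succAbove k) *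
            ∏ ℓ ∈ univ.erase k, b (i.succAbove ℓ) := by
      apply bord p (fun k => b (i.succAbove k)) (fun k => avec (i.succAbove k))
        (fun k => avec (i.succAbove k)) a
      · intro k l
        simp only [Matrix.submatrix_apply, mycs]
        rw [hdiag]
        simp [Fin.succAbove_right_inj]
      · intro k
        simp only [Matrix.submatrix_apply, mycs, mycslast]
        exact hcol (i.succAbove k)
      · intro l
        simp only [Matrix.submatrix_apply, mycs, mycslast]
        exact hrow (i.succAbove l)
      · simp only [Matrix.submatrix_apply, mycslast]
        exact hcorner
    rw [hN, myprod i b]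
    have hsum : ∑ k : Fin p, avec (i.succAbove k) * avec (i.succAbove k) *
          ∏ ℓ ∈ univ.erase k, b (i.succAbove ℓ)
        = ∑ k ∈ univ.erase i, (avec k)^2 * ∏ ℓ ∈ (univ.erase k).erase i, b ℓ := by
      rw [← myimg i, Finset.sum_image (fun x _ y _ h => Fin.succAbove_right_injective h)]
      apply Finset.sum_congr rfl
      intro k _
      have himg2 : Finset.image i.succAbove (univ.erase k)
          = (univ.erase (i.succAbove k)).erase i := by
        rw [Finset.image_erase Fin.succAbove_right_injective, myimg,
          Finset.erase_right_comm]
      have : ∏ ℓ ∈ univ.erase k, b (i.succAbove ℓ)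
          = ∏ ℓ ∈ (univ.erase (i.succAbove k)).erase i, b ℓ := by
        rw [← himg2, Finset.prod_image (fun x _ y _ h => Fin.succAbove_right_injective h)]
      rw [this]; ring
    rw [hsum, Fin.coe_castSucc, show (i:ℕ)+(i:ℕ) = 2*(i:ℕ) by omega, pow_mul]
    norm_num
  · -- part (iv)
    rw [bord (p+1) b avec avec a A hdiag hcol hrow hcorner]
    congr 1
    exact Finset.sum_congr rfl (fun k _ => by ring)
end

section
/- Let U ⊆ ℝⁿ be open and let u : U → ℝ be three times continuously differentiable. Then every column of the cofactor matrix of the Hessian of u is divergence-free on U: for each fixed j, Σ_{i=1}^{n} ∂_i (T^u)_{ij} = 0 at every point of U, where (T^u)_{ij} denotes the (i,j)-entry of the cofactor matrix of the Hessian matrix (∂_i ∂_j u). (This is the flat-space case of the identity expressing div(T^u) as a contraction of the Riemann curvature tensor.) -/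
/-- Partial derivative `∂ᵢ f` of a real-valued function on `ℝⁿ`. -/
noncomputable def partialDeriv' {n : ℕ} (i : Fin n)
    (f : EuclideanSpace ℝ (Fin n) → ℝ) (x : EuclideanSpace ℝ (Fin n)) : ℝ :=
  fderiv ℝ f x (EuclideanSpace.single i 1)

/-- Hessian matrix `(∂ᵢ∂ⱼ u)` of a real-valued function on `ℝⁿ`. -/
noncomputable def hessianMatrix {n : ℕ} (u : EuclideanSpace ℝ (Fin n) → ℝ)
    (x : EuclideanSpace ℝ (Fin n)) : Matrix (Fin n) (Fin n) ℝ :=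
  Matrix.of fun i j => partialDeriv' i (partialDeriv' j u) x

/-- The Hessian cofactor matrix `T^u`: the `(i,j)` entry is `(−1)^{i+j}` times the minor of
the Hessian matrix obtained by deleting row `i` and column `j`. -/
noncomputable def hessianCofactor {m : ℕ} (u : EuclideanSpace ℝ (Fin (m + 1)) → ℝ)
    (x : EuclideanSpace ℝ (Fin (m + 1))) : Matrix (Fin (m + 1)) (Fin (m + 1)) ℝ :=
  Matrix.of fun i j => (-1 : ℝ) ^ ((i : ℕ) + (j : ℕ)) *
    ((hessianMatrix u x).submatrix i.succAbove j.succAbove).det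


open Matrix

/-- The determinant, as a continuous multilinear map in the rows. -/
noncomputable def detCML (n : ℕ) :
    ContinuousMultilinearMap ℝ (fun _ : Fin n => (Fin n → ℝ)) ℝ :=
  MultilinearMap.mkContinuous
    (Matrix.detRowAlternating (R := ℝ) (n := Fin n)).toMultilinearMap
    (Nat.factorial n) (by
      intro M
      have h1 : (Matrix.detRowAlternating (R := ℝ) (n := Fin n)).toMultilinearMap M
          = Matrix.det (Matrix.of M) := rfl
      rw [h1, Matrix.det_apply']
      calc ‖∑ σ : Equiv.Perm (Fin n),
            ((Equiv.Perm.sign σ : ℤ) : ℝ) * ∏ i, Matrix.of M (σ i) i‖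
          ≤ ∑ σ : Equiv.Perm (Fin n), ‖((Equiv.Perm.sign σ : ℤ) : ℝ) * ∏ i, Matrix.of M (σ i) i‖ :=
            norm_sum_le _ _
        _ ≤ ∑ _σ : Equiv.Perm (Fin n), ∏ i, ‖M i‖ := by
            apply Finset.sum_le_sum
            intro σ _
            rw [norm_mul]
            have hs : ‖((Equiv.Perm.sign σ : ℤ) : ℝ)‖ = 1 := by
              rcases Int.units_eq_one_or (Equiv.Perm.sign σ) with h | h <;> simp [h]
            rw [hs, one_mul, norm_prod]
            calc ∏ i, ‖Matrix.of M (σ i) i‖ ≤ ∏ i, ‖M (σ i)‖ :=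
                  Finset.prod_le_prod (fun i _ => norm_nonneg _)
                    (fun i _ => norm_le_pi_norm (M (σ i)) i)
              _ = ∏ i, ‖M i‖ := Equiv.prod_comp σ (fun i => ‖M i‖)
        _ = (Nat.factorial n : ℝ) * ∏ i, ‖M i‖ := by
            rw [Finset.sum_const]
            simp [Finset.card_univ, Fintype.card_perm, nsmul_eq_mul]
      )

lemma detCML_apply (n : ℕ) (M : Fin n → Fin n → ℝ) :
    detCML n M = Matrix.det (Matrix.of M) := by
  simp [detCML]
  rfl

lemma cof_eq_det_updateRow {m : ℕ} (A : Matrix (Fin (m+1)) (Fin (m+1)) ℝ) (i j : Fin (m+1)) :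
    (-1:ℝ)^((i:ℕ)+(j:ℕ)) * (A.submatrix i.succAbove j.succAbove).det
    = (A.updateRow i (Pi.single j 1)).det := by
  rw [Matrix.det_succ_row _ i]
  have hsub : ∀ j' : Fin (m+1),
      (A.updateRow i (Pi.single j 1)).submatrix i.succAbove j'.succAbove
      = A.submatrix i.succAbove j'.succAbove := by
    intro j'
    ext a b
    simp [Matrix.updateRow_ne (Fin.succAbove_ne i a)]
  rw [Finset.sum_eq_single j]
  · simp [hsub]
  · intro b _ hb
    simp [hsub, Matrix.updateRow_self, Pi.single_apply, hb]
  · simp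

lemma contDiffOn_partialDeriv' {n : ℕ} {U : Set (EuclideanSpace ℝ (Fin n))} (hU : IsOpen U)
    {k : ℕ} {u : EuclideanSpace ℝ (Fin n) → ℝ}
    (hu : ContDiffOn ℝ (k + 1 : ℕ) u U) (l : Fin n) :
    ContDiffOn ℝ k (partialDeriv' l u) U := by
  have h1 : ContDiffOn ℝ k (fun y => fderiv ℝ u y) U := by
    apply hu.fderiv_of_isOpen hU
    norm_cast
  exact h1.clm_apply contDiffOn_const

/-- If `u` is three times continuously differentiable on an open set
`U ⊆ ℝⁿ`, then every column of the cofactor matrix of the Hessian of `u` is divergence-free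
on `U`: for each `j`, `Σᵢ ∂ᵢ (T^u)_{ij} = 0` on `U`. -/
theorem hessian_cofactor_divergence_free
    (m : ℕ) (U : Set (EuclideanSpace ℝ (Fin (m + 1)))) (hU : IsOpen U)
    (u : EuclideanSpace ℝ (Fin (m + 1)) → ℝ) (hu : ContDiffOn ℝ 3 u U) :
    ∀ j : Fin (m + 1), ∀ x ∈ U,
      ∑ i : Fin (m + 1), partialDeriv' i (fun y => hessianCofactor u y i j) x = 0 := by
  intro j x hx
  classical
  set e := (fun i => EuclideanSpace.single i 1 : Fin (m+1) → EuclideanSpace ℝ (Fin (m+1))) with he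
  set h : Fin (m + 1) → Fin (m + 1) → (EuclideanSpace ℝ (Fin (m + 1)) → ℝ) :=
    fun k l => partialDeriv' k (partialDeriv' l u) with hh
  have hu3 : ContDiffOn ℝ (2 + 1 : ℕ) u U := by exact_mod_cast hu
  have hv2 : ∀ l, ContDiffOn ℝ (1 + 1 : ℕ) (partialDeriv' l u) U := by
    intro l
    exact_mod_cast contDiffOn_partialDeriv' hU hu3 l
  have hh1 : ∀ k l, ContDiffOn ℝ (1 : ℕ) (h k l) U :=
    fun k l => contDiffOn_partialDeriv' hU (by exact_mod_cast hv2 l) k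
  have hdiff : ∀ k l, DifferentiableAt ℝ (h k l) x := fun k l =>
    (((hh1 k l).differentiableOn (by norm_num)).differentiableAt
      (hU.mem_nhds hx))
  set D : Fin (m + 1) → Fin (m + 1) → (EuclideanSpace ℝ (Fin (m + 1)) →L[ℝ] ℝ) := fun k l => fderiv ℝ (h k l) x with hD
  -- symmetry of third derivatives
  have hsymm : ∀ i k l, D k l (e i) = D i l (e k) := by
    intro i k l
    have hφ : DifferentiableAt ℝ (fderiv ℝ (partialDeriv' l u)) x := by
      have := ((hv2 l).fderiv_of_isOpen (m := 1) hU (le_refl _)).differentiableOn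
        (by norm_num)
      exact (this.differentiableAt (hU.mem_nhds hx))
    have hkey : ∀ a b : Fin (m + 1),
        D a l (e b) = fderiv ℝ (fderiv ℝ (partialDeriv' l u)) x (e b) (e a) := by
      intro a b
      have h2 : h a l = fun y => (fderiv ℝ (partialDeriv' l u) y) (e a) := rfl
      rw [hD]
      simp only [h2]
      rw [fderiv_clm_apply hφ (differentiableAt_const (e a))]
      simp
    have hsy := (((hv2 l).contDiffAt (hU.mem_nhds hx)).isSymmSndFDerivAt
      (n := ((1:ℕ)+1 : ℕ))) (by norm_num)
    rw [hkey k i, hkey i k]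
    exact hsy.eq _ _
  -- the constant row
  set c : Fin (m + 1) → ℝ := Pi.single j 1 with hc
  set H : Matrix (Fin (m+1)) (Fin (m+1)) ℝ := hessianMatrix u x with hHdef
  -- the term after differentiation
  set T : Fin (m + 1) → Fin (m + 1) → ℝ := fun i k =>
    Matrix.det (Matrix.updateRow (Matrix.updateRow H i c) k
      (if k = i then 0 else fun l => D k l (e i))) with hT
  -- step 1: each partial derivative equals ∑ k, T i k
  have hstep : ∀ i, partialDeriv' i (fun y => hessianCofactor u y i j) x = ∑ k, T i k := by
    intro i
    set g : Fin (m + 1) → EuclideanSpace ℝ (Fin (m + 1)) → (Fin (m + 1) → ℝ) :=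
      fun k y => Matrix.updateRow (hessianMatrix u y) i c k with hg
    set g' : Fin (m + 1) → (EuclideanSpace ℝ (Fin (m + 1)) →L[ℝ] (Fin (m + 1) → ℝ)) :=
      fun k => if k = i then 0 else ContinuousLinearMap.pi (fun l => D k l) with hg'
    have hgd : ∀ k, HasFDerivAt (g k) (g' k) x := by
      intro k
      by_cases hk : k = i
      · subst hk
        have : g k = fun _ => c := by
          funext y
          simp [hg]
        rw [this, hg']
        simp only [if_pos rfl]
        exact hasFDerivAt_const c x
      · have h1 : g k = fun y l => h k l y := by
          funext y l
          simp [hg, Matrix.updateRow_ne hk, hessianMatrix, hh, partialDeriv']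
        rw [h1, hg']
        simp only [if_neg hk]
        exact hasFDerivAt_pi.mpr (fun l => (hdiff k l).hasFDerivAt)
    have hcomp := HasFDerivAt.multilinear_comp (f := detCML (m + 1)) hgd
    have hfun : (fun y => (detCML (m+1)) (fun k => g k y))
        = fun y => hessianCofactor u y i j := by
      funext y
      rw [detCML_apply]
      have h1 : Matrix.of (fun k => g k y) = Matrix.updateRow (hessianMatrix u y) i c := rfl
      rw [h1, ← cof_eq_det_updateRow]
      rfl
    rw [hfun] at hcomp
    rw [partialDeriv', hcomp.fderiv]
    simp only [ContinuousLinearMap.coe_sum', Finset.sum_apply,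
      ContinuousLinearMap.coe_comp', Function.comp_apply]
    apply Finset.sum_congr rfl
    intro k _
    rw [ContinuousMultilinearMap.toContinuousLinearMap_apply]
    rw [hT]
    rw [detCML_apply]
    have hw : (g' k) (EuclideanSpace.single i 1)
        = (if k = i then 0 else fun l => D k l (e i)) := by
      rw [hg']
      rcases eq_or_ne k i with rfl | hk
      · simp
      · simp only [if_neg hk]
        rfl
    congr 1
    rw [hw]
    ext r l
    rcases eq_or_ne r k with rfl | hr
    · simp
    · simp [Function.update_of_ne hr, Matrix.updateRow_ne hr, hg, hHdef]
  -- step 2: T i i = 0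
  have hTzero : ∀ i, T i i = 0 := by
    intro i
    rw [hT]
    apply Matrix.det_eq_zero_of_row_eq_zero i
    intro l
    simp
  -- step 3: antisymmetry
  have hanti : ∀ i k, T i k = - T k i := by
    intro i k
    by_cases hik : i = k
    · subst hik; rw [hTzero i]; ring
    · have hw : (fun l => D k l (e i)) = (fun l => D i l (e k)) := by
        funext l; exact hsymm i k l
      have hM : Matrix.updateRow (Matrix.updateRow H k c) i (fun l => D i l (e k))
          = (Matrix.updateRow (Matrix.updateRow H i c) k
              (fun l => D k l (e i))).submatrix (Equiv.swap i k) id := by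
        ext r l
        rcases eq_or_ne r i with rfl | hri
        · simp [Equiv.swap_apply_left, hw, Matrix.updateRow_apply, hik, Ne.symm hik]
        · rcases eq_or_ne r k with rfl | hrk
          · simp [Equiv.swap_apply_right, Matrix.updateRow_apply, hik, Ne.symm hik, hri]
          · simp [Equiv.swap_apply_of_ne_of_ne hri hrk, Matrix.updateRow_apply,
              hri, hrk, hik, Ne.symm hik]
      rw [hT]
      simp only [if_neg (Ne.symm hik), if_neg hik]
      rw [hM, Matrix.det_permute (Equiv.swap i k), Equiv.Perm.sign_swap hik]
      simp
  -- conclude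
  have hS : ∑ i, ∑ k, T i k = 0 := by
    have h1 : ∑ i, ∑ k, T i k = ∑ i, ∑ k, - T k i := by
      apply Finset.sum_congr rfl; intro i _
      apply Finset.sum_congr rfl; intro k _
      exact hanti i k
    have h2 : ∑ i : Fin (m+1), ∑ k : Fin (m+1), - T k i
        = - ∑ k : Fin (m+1), ∑ i : Fin (m+1), T k i := by
      rw [← Finset.sum_neg_distrib]
      rw [Finset.sum_comm]
      apply Finset.sum_congr rfl; intro i _
      rw [Finset.sum_neg_distrib]
    have := h1.trans h2
    linarith
  calc ∑ i, partialDeriv' i (fun y => hessianCofactor u y i j) x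
      = ∑ i, ∑ k, T i k := Finset.sum_congr rfl (fun i _ => hstep i)
    _ = 0 := hS
end

section
/- Let U ⊆ ℝⁿ be open, let u : U → ℝ be twice continuously differentiable, and let p ∈ U be a point at which u is three times differentiable, ∇u(p) ≠ 0, and the Hessian ∇²u(p) is nondegenerate. Then the divergence at p of the vector field x ↦ T^u(x)(∇u(x)/‖∇u(x)‖ⁿ) equals ⟨div(T^u)(p), ∇u(p)/‖∇u(p)‖ⁿ⟩, where T^u is the cofactor matrix of the Hessian of u and div(T^u) is the vector field whose j-th component is Σ_i ∂_i (T^u)_{ij}. In particular, since div(T^u) = 0 in ℝⁿ, the vector field T^u(∇u/‖∇u‖ⁿ) is divergence-free at such points. -/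
open Finset in
lemma updateRow_single_det {n : ℕ} (A : Matrix (Fin (n+1)) (Fin (n+1)) ℝ) (i j : Fin (n+1)) :
    (A.updateRow i (Pi.single j 1)).det
      = (-1:ℝ)^((i:ℕ)+(j:ℕ)) * (A.submatrix i.succAbove j.succAbove).det := by
  rw [Matrix.det_succ_row _ i]
  rw [Finset.sum_eq_single j]
  · congr 1
    · simp
    · congr 1
      ext a b
      simp [Matrix.submatrix_apply, Matrix.updateRow_apply, Fin.succAbove_ne]
  · intro k _ hk
    simp [Matrix.updateRow_apply, Pi.single_apply, hk]
  · simp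

open Finset Equiv in
lemma updateRow_single_det_leibniz {n : ℕ} (A : Matrix (Fin (n+1)) (Fin (n+1)) ℝ) (i j : Fin (n+1)) :
    (A.updateRow i (Pi.single j 1)).det
      = ∑ σ : Equiv.Perm (Fin (n+1)), if σ j = i then
          (Equiv.Perm.sign σ : ℝ) * ∏ k ∈ Finset.univ.erase j, A (σ k) k else 0 := by
  rw [Matrix.det_apply]
  refine Finset.sum_congr rfl fun σ _ => ?_
  by_cases h : σ j = i
  · rw [if_pos h]
    have : ∏ k, (A.updateRow i (Pi.single j 1)) (σ k) k
        = ∏ k ∈ Finset.univ.erase j, A (σ k) k := by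
      rw [← Finset.prod_erase_mul _ _ (Finset.mem_univ j)]
      rw [Matrix.updateRow_apply, if_pos h]
      simp only [Pi.single_eq_same, mul_one]
      refine Finset.prod_congr rfl fun k hk => ?_
      have hk' : σ k ≠ i := by
        rw [← h]; exact fun hc => (Finset.mem_erase.1 hk).1 (σ.injective hc)
      rw [Matrix.updateRow_apply, if_neg hk']
    rw [this, Units.smul_def, zsmul_eq_mul]
  · rw [if_neg h]
    have : ∏ k, (A.updateRow i (Pi.single j 1)) (σ k) k = 0 := by
      apply Finset.prod_eq_zero (Finset.mem_univ (σ.symm i))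
      rw [Matrix.updateRow_apply, if_pos (σ.apply_symm_apply i)]
      have : σ.symm i ≠ j := fun hc => h (by rw [← hc, σ.apply_symm_apply])
      simp [Pi.single_apply, this]
    rw [this, smul_zero]

lemma cof_eq_adjugate {m : ℕ} (u : EuclideanSpace ℝ (Fin (m + 1)) → ℝ)
    (y : EuclideanSpace ℝ (Fin (m + 1))) (i j : Fin (m+1)) :
    hessianCofactor u y i j = (hessianMatrix u y).adjugate j i := by
  rw [Matrix.adjugate_apply, updateRow_single_det]
  rfl

lemma cof_leibniz {m : ℕ} (u : EuclideanSpace ℝ (Fin (m + 1)) → ℝ)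
    (y : EuclideanSpace ℝ (Fin (m + 1))) (i j : Fin (m+1)) :
    hessianCofactor u y i j
      = ∑ σ : Equiv.Perm (Fin (m+1)), if σ j = i then
          (Equiv.Perm.sign σ : ℝ) * ∏ k ∈ Finset.univ.erase j, hessianMatrix u y (σ k) k
        else 0 := by
  rw [cof_eq_adjugate, Matrix.adjugate_apply, updateRow_single_det_leibniz]

lemma clm_apply_eq_sum {n : ℕ} (L : EuclideanSpace ℝ (Fin n) →L[ℝ] ℝ)
    (x : EuclideanSpace ℝ (Fin n)) :
    L x = ∑ b, x b * L (EuclideanSpace.single b 1) := by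
  conv_lhs => rw [← (EuclideanSpace.basisFun (Fin n) ℝ).sum_repr x]
  rw [map_sum]
  refine Finset.sum_congr rfl fun b _ => ?_
  rw [EuclideanSpace.basisFun_repr, EuclideanSpace.basisFun_apply, map_smul, smul_eq_mul]

section
variable {m : ℕ} {U : Set (EuclideanSpace ℝ (Fin (m + 1)))} (hU : IsOpen U)
  {u : EuclideanSpace ℝ (Fin (m + 1)) → ℝ} (hu : ContDiffOn ℝ 2 u U)
  {p : EuclideanSpace ℝ (Fin (m + 1))} (hp : p ∈ U)

include hU hu hp

-- C¹ of partial derivatives of u on U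
lemma partial_contDiffOn (l : Fin (m+1)) :
    ContDiffOn ℝ 1 (fun y => partialDeriv' l u y) U := by
  have hφ : ContDiffOn ℝ 1 (fun y => fderiv ℝ u y) U :=
    hu.fderiv_of_isOpen hU (by norm_num)
  exact (ContinuousLinearMap.apply ℝ ℝ
    (EuclideanSpace.single l (1:ℝ))).contDiff.comp_contDiffOn hφ

lemma partial_differentiableAt (l : Fin (m+1)) :
    DifferentiableAt ℝ (fun y => partialDeriv' l u y) p :=
  (((partial_contDiffOn hU hu hp l).differentiableOn one_ne_zero)).differentiableAt
    (hU.mem_nhds hp)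

lemma schwarz
    (h3 : ∀ i j : Fin (m + 1), DifferentiableAt ℝ (fun y => hessianMatrix u y i j) p)
    (a b l : Fin (m+1)) :
    partialDeriv' a (fun y => partialDeriv' b (partialDeriv' l u) y) p
      = partialDeriv' b (fun y => partialDeriv' a (partialDeriv' l u) y) p := by
  set f : EuclideanSpace ℝ (Fin (m+1)) → ℝ := fun y => partialDeriv' l u y with hf
  have hf1 : ContDiffOn ℝ 1 f U := partial_contDiffOn hU hu hp l
  have hfd : ∀ y ∈ U, HasFDerivAt f (fderiv ℝ f y) y := fun y hy =>
    (((hf1.differentiableOn one_ne_zero)).differentiableAt (hU.mem_nhds hy)).hasFDerivAt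
  have hev : ∀ᶠ y in nhds p, HasFDerivAt f (fderiv ℝ f y) y :=
    Filter.eventually_of_mem (hU.mem_nhds hp) hfd
  set G : EuclideanSpace ℝ (Fin (m+1)) → (EuclideanSpace ℝ (Fin (m+1)) →L[ℝ] ℝ) :=
    fun y => ∑ c, (hessianMatrix u y c l) • (EuclideanSpace.proj c :
      EuclideanSpace ℝ (Fin (m+1)) →L[ℝ] ℝ) with hG
  have hGd : DifferentiableAt ℝ G p := by
    exact DifferentiableAt.fun_sum fun c _ => (h3 c l).smul_const _
  have heq : (fun y => fderiv ℝ f y) =ᶠ[nhds p] G := by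
    refine Filter.eventually_of_mem (hU.mem_nhds hp) fun y hy => ?_
    ext x
    rw [clm_apply_eq_sum]
    simp only [hG, ContinuousLinearMap.sum_apply, ContinuousLinearMap.smul_apply,
      smul_eq_mul]
    refine Finset.sum_congr rfl fun c _ => ?_
    rw [mul_comm]
    rfl
  have hG' : HasFDerivAt (fun y => fderiv ℝ f y) (fderiv ℝ G p) p :=
    hGd.hasFDerivAt.congr_of_eventuallyEq heq
  have hsym := second_derivative_symmetric_of_eventually hev hG'
    (EuclideanSpace.single a 1) (EuclideanSpace.single b 1)
  have key : ∀ c d : Fin (m+1),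
      partialDeriv' c (fun y => partialDeriv' d f y) p
        = fderiv ℝ G p (EuclideanSpace.single c 1) (EuclideanSpace.single d 1) := by
    intro c d
    have h1 : HasFDerivAt (fun y => fderiv ℝ f y (EuclideanSpace.single d 1))
        ((ContinuousLinearMap.apply ℝ ℝ (EuclideanSpace.single d (1:ℝ))).comp
          (fderiv ℝ G p)) p :=
      (ContinuousLinearMap.apply ℝ ℝ (EuclideanSpace.single d (1:ℝ))).hasFDerivAt.comp p hG'
    have := h1.fderiv
    simp only [partialDeriv']
    rw [this]
    rfl
  rw [key a b, key b a]
  exact hsym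

end

open Finset Equiv in
lemma cof_hasFDerivAt {m : ℕ}
    {u : EuclideanSpace ℝ (Fin (m + 1)) → ℝ}
    {p : EuclideanSpace ℝ (Fin (m + 1))}
    (h3 : ∀ i j : Fin (m + 1), DifferentiableAt ℝ (fun y => hessianMatrix u y i j) p)
    (i j : Fin (m+1)) :
    HasFDerivAt (fun y => hessianCofactor u y i j)
      (∑ σ : Equiv.Perm (Fin (m+1)), if σ j = i then
        (Equiv.Perm.sign σ : ℝ) •
          (∑ l ∈ Finset.univ.erase j,
            (∏ k ∈ (Finset.univ.erase j).erase l, hessianMatrix u p (σ k) k) •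
              fderiv ℝ (fun y => hessianMatrix u y (σ l) l) p)
      else 0) p := by
  have hfun : (fun y => hessianCofactor u y i j)
      = fun y => ∑ σ : Equiv.Perm (Fin (m+1)), if σ j = i then
          (Equiv.Perm.sign σ : ℝ) * ∏ k ∈ Finset.univ.erase j, hessianMatrix u y (σ k) k
        else 0 := funext fun y => cof_leibniz u y i j
  rw [hfun]
  apply HasFDerivAt.fun_sum
  intro σ _
  by_cases h : σ j = i
  · simp only [if_pos h]
    have hprod : HasFDerivAt (fun y => ∏ k ∈ Finset.univ.erase j, hessianMatrix u y (σ k) k)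
        (∑ l ∈ Finset.univ.erase j,
          (∏ k ∈ (Finset.univ.erase j).erase l, hessianMatrix u p (σ k) k) •
            fderiv ℝ (fun y => hessianMatrix u y (σ l) l) p) p :=
      HasFDerivAt.finset_prod fun l _ => (h3 (σ l) l).hasFDerivAt
    exact hprod.const_mul _
  · simp only [if_neg h]
    exact hasFDerivAt_const 0 p

open Finset Equiv in
lemma piola {m : ℕ} {U : Set (EuclideanSpace ℝ (Fin (m + 1)))} (hU : IsOpen U)
    {u : EuclideanSpace ℝ (Fin (m + 1)) → ℝ} (hu : ContDiffOn ℝ 2 u U)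
    {p : EuclideanSpace ℝ (Fin (m + 1))} (hp : p ∈ U)
    (h3 : ∀ i j : Fin (m + 1), DifferentiableAt ℝ (fun y => hessianMatrix u y i j) p)
    (j : Fin (m+1)) :
    ∑ i : Fin (m+1), partialDeriv' i (fun y => hessianCofactor u y i j) p = 0 := by
  have hpd : ∀ i, partialDeriv' i (fun y => hessianCofactor u y i j) p
      = ∑ σ : Perm (Fin (m+1)), if σ j = i then
          (Perm.sign σ : ℝ) * ∑ l ∈ univ.erase j,
            (∏ k ∈ (univ.erase j).erase l, hessianMatrix u p (σ k) k) *
              partialDeriv' i (fun y => hessianMatrix u y (σ l) l) p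
        else 0 := by
    intro i
    have h := (cof_hasFDerivAt h3 i j).fderiv
    show fderiv ℝ _ p (EuclideanSpace.single i 1) = _
    rw [h, ContinuousLinearMap.sum_apply]
    refine Finset.sum_congr rfl fun σ _ => ?_
    rw [apply_ite (fun L : EuclideanSpace ℝ (Fin (m+1)) →L[ℝ] ℝ =>
      L (EuclideanSpace.single i 1))]
    simp only [ContinuousLinearMap.zero_apply, ContinuousLinearMap.smul_apply,
      ContinuousLinearMap.sum_apply, smul_eq_mul]
    rfl
  simp only [hpd]
  rw [Finset.sum_comm]
  have hcol : ∀ σ : Perm (Fin (m+1)),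
      (∑ i : Fin (m+1), if σ j = i then
        (Perm.sign σ : ℝ) * ∑ l ∈ univ.erase j,
          (∏ k ∈ (univ.erase j).erase l, hessianMatrix u p (σ k) k) *
            partialDeriv' i (fun y => hessianMatrix u y (σ l) l) p
      else 0)
      = ∑ l ∈ univ.erase j, (Perm.sign σ : ℝ) *
          ((∏ k ∈ (univ.erase j).erase l, hessianMatrix u p (σ k) k) *
            partialDeriv' (σ j) (fun y => hessianMatrix u y (σ l) l) p) := by
    intro σ
    rw [Finset.sum_ite_eq univ (σ j)]
    rw [if_pos (Finset.mem_univ _), Finset.mul_sum]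
  simp only [hcol]
  rw [Finset.sum_comm]
  refine Finset.sum_eq_zero fun l hl => ?_
  have hlj : l ≠ j := (Finset.mem_erase.1 hl).1
  set τ : Perm (Fin (m+1)) := Equiv.swap j l with hτ
  set F : Perm (Fin (m+1)) → ℝ := fun σ => (Perm.sign σ : ℝ) *
      ((∏ k ∈ (univ.erase j).erase l, hessianMatrix u p (σ k) k) *
        partialDeriv' (σ j) (fun y => hessianMatrix u y (σ l) l) p) with hF
  have key : ∀ σ, F (σ * τ) = - F σ := by
    intro σ
    have hsign : ((Perm.sign (σ * τ) : ℤ) : ℝ) = -((Perm.sign σ : ℤ) : ℝ) := by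
      rw [Perm.sign_mul, hτ, Perm.sign_swap (Ne.symm hlj)]
      push_cast
      ring
    have hP : (∏ k ∈ (univ.erase j).erase l, hessianMatrix u p ((σ * τ) k) k)
        = ∏ k ∈ (univ.erase j).erase l, hessianMatrix u p (σ k) k := by
      refine Finset.prod_congr rfl fun k hk => ?_
      have hk1 : k ≠ l := (Finset.mem_erase.1 hk).1
      have hk2 : k ≠ j := (Finset.mem_erase.1 (Finset.mem_erase.1 hk).2).1
      rw [Perm.mul_apply, hτ, Equiv.swap_apply_of_ne_of_ne hk2 hk1]
    have hjτ : (σ * τ) j = σ l := by rw [Perm.mul_apply, hτ, Equiv.swap_apply_left]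
    have hlτ : (σ * τ) l = σ j := by rw [Perm.mul_apply, hτ, Equiv.swap_apply_right]
    have hD : partialDeriv' ((σ * τ) j) (fun y => hessianMatrix u y ((σ * τ) l) l) p
        = partialDeriv' (σ j) (fun y => hessianMatrix u y (σ l) l) p := by
      rw [hjτ, hlτ]
      exact schwarz hU hu hp h3 (σ l) (σ j) l
    rw [hF]
    simp only
    rw [hP, hD, hsign]
    ring
  have hS : ∑ σ : Perm (Fin (m+1)), F σ = ∑ σ : Perm (Fin (m+1)), F (σ * τ) :=
    (Fintype.sum_equiv (Equiv.mulRight τ) _ _ fun σ => rfl).symm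
  have h2 : ∑ σ : Perm (Fin (m+1)), F (σ * τ) = ∑ σ : Perm (Fin (m+1)), - F σ :=
    Finset.sum_congr rfl fun σ _ => key σ
  rw [Finset.sum_neg_distrib] at h2
  have h3' := hS.trans h2
  linarith [h3']

open Finset in
lemma cof_expansion {m : ℕ} (u : EuclideanSpace ℝ (Fin (m + 1)) → ℝ)
    (p : EuclideanSpace ℝ (Fin (m + 1))) (j : Fin (m+1)) :
    ∑ i, hessianCofactor u p i j * hessianMatrix u p i j = (hessianMatrix u p).det := by
  rw [Matrix.det_succ_column (hessianMatrix u p) j]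
  refine Finset.sum_congr rfl fun i _ => ?_
  show ((-1 : ℝ) ^ ((i : ℕ) + (j : ℕ)) *
    ((hessianMatrix u p).submatrix i.succAbove j.succAbove).det) * hessianMatrix u p i j = _
  ring

open Finset in
lemma cof_orth {m : ℕ} (u : EuclideanSpace ℝ (Fin (m + 1)) → ℝ)
    (p : EuclideanSpace ℝ (Fin (m + 1))) (j k : Fin (m+1)) :
    ∑ i, hessianCofactor u p i j * hessianMatrix u p i k
      = if j = k then (hessianMatrix u p).det else 0 := by
  have h := Matrix.adjugate_mul (hessianMatrix u p)
  have h2 := congrFun (congrFun h j) k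
  rw [Matrix.mul_apply] at h2
  simp only [Matrix.smul_apply, Matrix.one_apply, smul_eq_mul] at h2
  rw [show (if j = k then (hessianMatrix u p).det else 0)
      = (hessianMatrix u p).det * if j = k then 1 else 0 by split <;> simp]
  rw [← h2]
  refine Finset.sum_congr rfl fun i _ => ?_
  rw [cof_eq_adjugate]

open Finset in
/-- Let `u` be `C²` on an open set `U ⊆ ℝⁿ` (`n = m + 1`) and let `p ∈ U`
be a point at which `u` is three times differentiable, `∇u(p) ≠ 0` and the Hessian is
nondegenerate.  Then the divergence at `p` of the vector field `T^u(∇u/‖∇u‖ⁿ)` equals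
`⟨div(T^u)(p), ∇u(p)/‖∇u(p)‖ⁿ⟩`; in particular, since `div(T^u) = 0` in `ℝⁿ`, this vector
field is divergence-free at such points. -/
theorem divergence_of_cofactor_field
    (m : ℕ) (U : Set (EuclideanSpace ℝ (Fin (m + 1)))) (hU : IsOpen U)
    (u : EuclideanSpace ℝ (Fin (m + 1)) → ℝ) (hu : ContDiffOn ℝ 2 u U)
    (p : EuclideanSpace ℝ (Fin (m + 1))) (hp : p ∈ U)
    (h3 : ∀ i j : Fin (m + 1),
      DifferentiableAt ℝ (fun y => hessianMatrix u y i j) p)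
    (hgrad : gradient u p ≠ 0) (hnd : (hessianMatrix u p).det ≠ 0) :
    (∑ i : Fin (m + 1), partialDeriv' i (fun y =>
        (∑ j : Fin (m + 1), hessianCofactor u y i j * gradient u y j) /
          ‖gradient u y‖ ^ (m + 1)) p) =
      ∑ j : Fin (m + 1),
        (∑ i : Fin (m + 1), partialDeriv' i (fun y => hessianCofactor u y i j) p) *
          (gradient u p j / ‖gradient u p‖ ^ (m + 1)) ∧
    (∑ i : Fin (m + 1), partialDeriv' i (fun y =>
        (∑ j : Fin (m + 1), hessianCofactor u y i j * gradient u y j) /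
          ‖gradient u y‖ ^ (m + 1)) p) = 0 := by
  classical
  -- gradient coordinates
  have hgc : ∀ (y : EuclideanSpace ℝ (Fin (m+1))) (j : Fin (m+1)),
      gradient u y j = partialDeriv' j u y := by
    intro y j
    have h1 : gradient u y j = inner ℝ (gradient u y) (EuclideanSpace.single j (1:ℝ)) := by
      rw [EuclideanSpace.inner_single_right]; simp
    rw [h1, gradient, InnerProductSpace.toDual_symm_apply]; rfl
  -- notation
  set g : Fin (m+1) → ℝ := fun j => partialDeriv' j u p with hgdef
  -- squared norm of gradient as a function
  set s : EuclideanSpace ℝ (Fin (m+1)) → ℝ :=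
    fun y => ∑ k, (partialDeriv' k u y)^2 with hsdef
  have hnorm : ∀ y, ‖gradient u y‖ = Real.sqrt (s y) := by
    intro y
    rw [EuclideanSpace.norm_eq]
    congr 1
    exact Finset.sum_congr rfl fun k _ => by rw [hgc, Real.norm_eq_abs, sq_abs]
  have hsp_pos : 0 < s p := by
    have h1 : 0 < ‖gradient u p‖ := norm_pos_iff.2 hgrad
    rw [hnorm] at h1
    exact Real.sqrt_pos.1 h1
  set r : ℝ := Real.sqrt (s p) with hrdef
  have hr_pos : 0 < r := Real.sqrt_pos.2 hsp_pos
  have hr2 : r ^ 2 = s p := Real.sq_sqrt hsp_pos.le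
  -- derivatives of first partials
  have hgD : ∀ j : Fin (m+1), HasFDerivAt (fun y => partialDeriv' j u y)
      (fderiv ℝ (fun y => partialDeriv' j u y) p) p :=
    fun j => (partial_differentiableAt hU hu hp j).hasFDerivAt
  have hLe : ∀ i j : Fin (m+1),
      fderiv ℝ (fun y => partialDeriv' j u y) p (EuclideanSpace.single i 1)
        = hessianMatrix u p i j := fun i j => rfl
  -- derivative of s
  have hsD : HasFDerivAt s (∑ k, (g k • fderiv ℝ (fun y => partialDeriv' k u y) p
      + g k • fderiv ℝ (fun y => partialDeriv' k u y) p)) p := by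
    apply HasFDerivAt.fun_sum
    intro k _
    have heq : (fun y => (partialDeriv' k u y)^2)
        = fun y => partialDeriv' k u y * partialDeriv' k u y := funext fun y => sq _
    rw [heq]
    exact (hgD k).mul (hgD k)
  -- the scalar function w = (sqrt ∘ s)^{-(m+1)}
  set w : EuclideanSpace ℝ (Fin (m+1)) → ℝ :=
    fun y => (Real.sqrt (s y) ^ (m+1))⁻¹ with hwdef
  set dw : ℝ := -((m+1 : ℝ) * r ^ m * (1 / (2 * r))) / (r ^ (m+1))^2 with hdwdef
  have hφ : HasDerivAt (fun t => (Real.sqrt t ^ (m+1))⁻¹) dw (s p) := by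
    have h1 : HasDerivAt (fun t => Real.sqrt t ^ (m+1))
        ((m+1 : ℝ) * r ^ m * (1/(2*r))) (s p) := by
      have h0 := (Real.hasDerivAt_sqrt hsp_pos.ne').fun_pow (m+1)
      simpa [hrdef] using h0
    have h2 := h1.fun_inv (by positivity : Real.sqrt (s p) ^ (m+1) ≠ 0)
    simpa [hdwdef, hrdef] using h2
  have hwD : HasFDerivAt w (dw • (∑ k, (g k • fderiv ℝ (fun y => partialDeriv' k u y) p
      + g k • fderiv ℝ (fun y => partialDeriv' k u y) p))) p :=
    hφ.comp_hasFDerivAt p hsD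
  have hwp : w p = (r ^ (m+1))⁻¹ := rfl
  -- cofactor derivatives
  have hCD : ∀ i j : Fin (m+1), HasFDerivAt (fun y => hessianCofactor u y i j)
      (fderiv ℝ (fun y => hessianCofactor u y i j) p) p :=
    fun i j => ((cof_hasFDerivAt h3 i j).differentiableAt).hasFDerivAt
  have hKe : ∀ i j : Fin (m+1),
      fderiv ℝ (fun y => hessianCofactor u y i j) p (EuclideanSpace.single i 1)
        = partialDeriv' i (fun y => hessianCofactor u y i j) p := fun i j => rfl
  -- numerator functions
  have hND : ∀ i : Fin (m+1), HasFDerivAt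
      (fun y => ∑ j, hessianCofactor u y i j * partialDeriv' j u y)
      (∑ j, (hessianCofactor u p i j • fderiv ℝ (fun y => partialDeriv' j u y) p
        + g j • fderiv ℝ (fun y => hessianCofactor u y i j) p)) p :=
    fun i => HasFDerivAt.fun_sum fun j _ => (hCD i j).mul (hgD j)
  -- goal functions coincide with N i * w
  have hfun : ∀ i : Fin (m+1),
      (fun y => (∑ j, hessianCofactor u y i j * gradient u y j) / ‖gradient u y‖ ^ (m + 1))
        = fun y => (∑ j, hessianCofactor u y i j * partialDeriv' j u y) * w y := by
    intro i
    funext y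
    rw [div_eq_mul_inv]
    congr 1
    · exact Finset.sum_congr rfl fun j _ => by rw [hgc]
    · rw [hnorm]
  -- partial derivative values of V i
  have hVD : ∀ i : Fin (m+1), HasFDerivAt
      (fun y => (∑ j, hessianCofactor u y i j * partialDeriv' j u y) * w y)
      ((∑ j, hessianCofactor u p i j * g j) •
        (dw • (∑ k, (g k • fderiv ℝ (fun y => partialDeriv' k u y) p
          + g k • fderiv ℝ (fun y => partialDeriv' k u y) p)))
       + w p • (∑ j, (hessianCofactor u p i j • fderiv ℝ (fun y => partialDeriv' j u y) p
          + g j • fderiv ℝ (fun y => hessianCofactor u y i j) p))) p :=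
    fun i => (hND i).mul hwD
  have hpd : ∀ i : Fin (m+1), partialDeriv' i (fun y =>
        (∑ j, hessianCofactor u y i j * gradient u y j) / ‖gradient u y‖ ^ (m + 1)) p
      = (∑ j, hessianCofactor u p i j * g j) *
          (dw * (∑ k, (g k * hessianMatrix u p i k + g k * hessianMatrix u p i k)))
        + w p * (∑ j, (hessianCofactor u p i j * hessianMatrix u p i j
            + g j * partialDeriv' i (fun y => hessianCofactor u y i j) p)) := by
    intro i
    rw [show partialDeriv' i (fun y =>
        (∑ j, hessianCofactor u y i j * gradient u y j) / ‖gradient u y‖ ^ (m + 1)) p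
      = fderiv ℝ (fun y =>
        (∑ j, hessianCofactor u y i j * gradient u y j) / ‖gradient u y‖ ^ (m + 1)) p
          (EuclideanSpace.single i 1) from rfl]
    rw [hfun i, (hVD i).fderiv]
    simp only [ContinuousLinearMap.add_apply, ContinuousLinearMap.smul_apply,
      ContinuousLinearMap.sum_apply, smul_eq_mul, hLe, hKe]
  -- algebraic identities
  set detp : ℝ := (hessianMatrix u p).det with hdetp
  have claimCA : ∑ i : Fin (m+1), ∑ j, hessianCofactor u p i j * hessianMatrix u p i j
      = (m+1 : ℝ) * detp := by
    rw [Finset.sum_comm]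
    rw [Finset.sum_congr rfl fun j _ => cof_expansion u p j]
    simp [Finset.sum_const, Finset.card_univ, nsmul_eq_mul, hdetp]
  have claimW : ∑ i : Fin (m+1), (∑ j, hessianCofactor u p i j * g j) *
        (∑ k, (g k * hessianMatrix u p i k + g k * hessianMatrix u p i k))
      = 2 * detp * s p := by
    have step1 : ∀ i : Fin (m+1), (∑ j, hessianCofactor u p i j * g j) *
          (∑ k, (g k * hessianMatrix u p i k + g k * hessianMatrix u p i k))
        = ∑ j, ∑ k, 2 * (g j * (g k * (hessianCofactor u p i j * hessianMatrix u p i k))) := by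
      intro i
      rw [Finset.sum_mul_sum]
      exact Finset.sum_congr rfl fun j _ => Finset.sum_congr rfl fun k _ => by ring
    rw [Finset.sum_congr rfl fun i _ => step1 i]
    rw [Finset.sum_comm]
    have step2 : ∀ j : Fin (m+1),
        ∑ i : Fin (m+1), ∑ k, 2 * (g j * (g k * (hessianCofactor u p i j * hessianMatrix u p i k)))
          = 2 * (g j * (g j * detp)) := by
      intro j
      rw [Finset.sum_comm]
      have inner : ∀ k : Fin (m+1),
          ∑ i : Fin (m+1), 2 * (g j * (g k * (hessianCofactor u p i j * hessianMatrix u p i k)))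
            = 2 * (g j * (g k * (if j = k then detp else 0))) := by
        intro k
        rw [show (if j = k then detp else 0)
          = ∑ i : Fin (m+1), hessianCofactor u p i j * hessianMatrix u p i k from
            (cof_orth u p j k).symm]
        simp only [Finset.mul_sum]
      rw [Finset.sum_congr rfl fun k _ => inner k]
      simp only [mul_ite, mul_zero]
      rw [Finset.sum_ite_eq]
      simp
    rw [Finset.sum_congr rfl fun j _ => step2 j]
    have hsp : s p = ∑ j, g j ^ 2 := rfl
    rw [hsp, Finset.mul_sum]
    exact Finset.sum_congr rfl fun j _ => by ring
  -- put the divergence together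
  have main1 : (∑ i : Fin (m + 1), partialDeriv' i (fun y =>
        (∑ j : Fin (m + 1), hessianCofactor u y i j * gradient u y j) /
          ‖gradient u y‖ ^ (m + 1)) p)
      = w p * ∑ i : Fin (m+1), ∑ j, g j *
          partialDeriv' i (fun y => hessianCofactor u y i j) p := by
    rw [Finset.sum_congr rfl fun i _ => hpd i]
    rw [Finset.sum_add_distrib]
    have hA1 : ∑ i : Fin (m+1), (∑ j, hessianCofactor u p i j * g j) *
          (dw * (∑ k, (g k * hessianMatrix u p i k + g k * hessianMatrix u p i k)))
        = dw * (2 * detp * s p) := by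
      rw [← claimW, Finset.mul_sum]
      exact Finset.sum_congr rfl fun i _ => by ring
    have hA2 : ∑ i : Fin (m+1), w p * (∑ j, (hessianCofactor u p i j * hessianMatrix u p i j
          + g j * partialDeriv' i (fun y => hessianCofactor u y i j) p))
        = w p * ((m+1 : ℝ) * detp) + w p * (∑ i : Fin (m+1), ∑ j, g j *
            partialDeriv' i (fun y => hessianCofactor u y i j) p) := by
      rw [← Finset.mul_sum]
      rw [Finset.sum_congr rfl fun i (_ : i ∈ Finset.univ) => Finset.sum_add_distrib]
      rw [Finset.sum_add_distrib, claimCA, mul_add]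
    rw [hA1, hA2]
    have hzero : dw * (2 * detp * s p) + w p * ((m+1 : ℝ) * detp) = 0 := by
      rw [← hr2, hdwdef, hwp]
      field_simp
      ring
    rw [← add_assoc, hzero, zero_add]
  have main2 : (∑ j : Fin (m + 1),
        (∑ i : Fin (m + 1), partialDeriv' i (fun y => hessianCofactor u y i j) p) *
          (gradient u p j / ‖gradient u p‖ ^ (m + 1)))
      = w p * ∑ i : Fin (m+1), ∑ j, g j *
          partialDeriv' i (fun y => hessianCofactor u y i j) p := by
    have hterm : ∀ j : Fin (m+1),
        (∑ i : Fin (m + 1), partialDeriv' i (fun y => hessianCofactor u y i j) p) *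
            (gradient u p j / ‖gradient u p‖ ^ (m + 1))
          = w p * (g j * ∑ i : Fin (m+1),
              partialDeriv' i (fun y => hessianCofactor u y i j) p) := by
      intro j
      rw [hgc, hnorm, div_eq_mul_inv, ← hrdef, ← hwp]
      ring
    rw [Finset.sum_congr rfl fun j _ => hterm j]
    rw [← Finset.mul_sum]
    congr 1
    rw [Finset.sum_comm]
    exact Finset.sum_congr rfl fun j _ => Finset.mul_sum _ _ _
  have hz : ∀ j : Fin (m+1),
      ∑ i : Fin (m+1), partialDeriv' i (fun y => hessianCofactor u y i j) p = 0 :=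
    piola hU hu hp h3
  constructor
  · exact main1.trans main2.symm
  · rw [main1.trans main2.symm]
    exact Finset.sum_eq_zero fun j _ => by rw [hz j, zero_mul]
end

section
/- Let H be a real Hilbert space, let u : H → ℝ be convex and continuous, and let t > 0. Then the Moreau envelope ũᵗ(x) := inf_{y ∈ H} ( u(y) + ‖x − y‖²/(2t) ) is a convex function on H and is continuously (Fréchet) differentiable on H. -/
open Set Filter

theorem aux_affine_minorant' {H : Type*} [NormedAddCommGroup H] [NormedSpace ℝ H]
    (u : H → ℝ) (hconv : ConvexOn ℝ Set.univ u) (hcont : Continuous u) :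
    ∃ (φ : H →L[ℝ] ℝ) (c : ℝ), ∀ y, c + φ y ≤ u y := by
  set S : Set (H × ℝ) := {p | u p.1 < p.2} with hS
  have hSconv : Convex ℝ S := by
    intro p hp q hq a b ha hb hab
    have h1 : u (a • p.1 + b • q.1) ≤ a * u p.1 + b * u q.1 :=
      hconv.2 (mem_univ _) (mem_univ _) ha hb hab
    have : a * u p.1 + b * u q.1 < a * p.2 + b * q.2 := by
      rcases eq_or_lt_of_le ha with ha'|ha'
      · simp only [← ha'] at hab ⊢
        simp only [zero_mul, zero_add] at *
        have hb1 : b = 1 := by linarith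
        simpa [hb1, hS] using hq
      rcases eq_or_lt_of_le hb with hb'|hb'
      · simp only [← hb'] at hab ⊢
        have ha1 : a = 1 := by linarith
        simp only [mul_zero, add_zero] at *
        simpa [ha1, hS] using hp
      · exact add_lt_add ((mul_lt_mul_iff_right₀ ha').2 hp) ((mul_lt_mul_iff_right₀ hb').2 hq)
    exact lt_of_le_of_lt h1 this
  have hSopen : IsOpen S := by
    have : S = (fun p : H × ℝ => p.2 - u p.1) ⁻¹' (Ioi 0) := by
      ext p; simp [hS, sub_pos]
    rw [this]
    exact (continuous_snd.sub (hcont.comp continuous_fst)).isOpen_preimage _ isOpen_Ioi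
  have hx0 : ((0 : H), u 0) ∉ S := by simp [hS]
  obtain ⟨f, hf⟩ := geometric_hahn_banach_open_point hSconv hSopen hx0
  set c := f ((0 : H), (1 : ℝ)) with hc
  have hsplit : ∀ (y : H) (r : ℝ), f (y, r) = f (y, 0) + r * c := by
    intro y r
    have : (y, r) = (y, (0:ℝ)) + r • ((0 : H), (1:ℝ)) := by
      simp [Prod.ext_iff]
    rw [this, map_add, map_smul, smul_eq_mul]
  have hcneg : c < 0 := by
    have h1 : f ((0:H), u 0 + 1) < f ((0:H), u 0) := hf _ (by simp [hS])
    rw [hsplit 0 (u 0 + 1), hsplit 0 (u 0)] at h1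
    linarith
  have key : ∀ y, f (y, 0) + u y * c ≤ f ((0:H), 0) + u 0 * c := by
    intro y
    by_contra hcon
    push_neg at hcon
    set ε := (f (y,0) + u y * c - (f ((0:H),0) + u 0 * c)) / (-c) with hε
    have hεpos : 0 < ε := div_pos (by linarith) (by linarith)
    have := hf (y, u y + ε) (by simp [hS, hεpos])
    rw [hsplit y (u y + ε), hsplit 0 (u 0)] at this
    have hcne : (-c) ≠ 0 := by linarith
    have hεc : ε * (-c) = f (y,0) + u y * c - (f ((0:H),0) + u 0 * c) := by
      rw [hε, div_mul_cancel₀ _ hcne]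
    nlinarith [this]
  refine ⟨(-c)⁻¹ • (f.comp (ContinuousLinearMap.inl ℝ H ℝ)), f ((0:H),0) / c + u 0, ?_⟩
  intro y
  have hy := key y
  have hφ : ((-c)⁻¹ • (f.comp (ContinuousLinearMap.inl ℝ H ℝ))) y = (-c)⁻¹ * f (y, 0) := by
    simp [ContinuousLinearMap.smul_apply, ContinuousLinearMap.comp_apply]
  rw [hφ]
  have hcne : c ≠ 0 := ne_of_lt hcneg
  have hinvneg : c⁻¹ < 0 := inv_lt_zero.mpr hcneg
  have h3 := mul_le_mul_of_nonpos_right hy (le_of_lt hinvneg)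
  have e1 : (f ((0:H),0) + u 0 * c) * c⁻¹ = f ((0:H),0) * c⁻¹ + u 0 := by field_simp
  have e2 : (f (y,0) + u y * c) * c⁻¹ = f (y,0) * c⁻¹ + u y := by field_simp
  rw [e1, e2] at h3
  rw [inv_neg, div_eq_mul_inv]
  linarith

theorem aux_exists_min' {H : Type*} [NormedAddCommGroup H] [NormedSpace ℝ H] [CompleteSpace H]
    (f : H → ℝ) (hf : Continuous f) (hbdd : BddBelow (Set.range f)) (K : ℝ) (hK : 0 < K)
    (hmid : ∀ y z, f ((2:ℝ)⁻¹ • (y + z)) ≤ (f y + f z)/2 - K * ‖y - z‖^2) :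
    ∃ p, ∀ y, f p ≤ f y := by
  set m := ⨅ y, f y with hm'
  have hm : ∀ y, m ≤ f y := fun y => ciInf_le hbdd y
  have hseq : ∀ n : ℕ, ∃ y, f y < m + 1/(n+1) := by
    intro n
    apply exists_lt_of_ciInf_lt
    have : 0 < 1/((n:ℝ)+1) := by positivity
    linarith
  choose y hy using hseq
  have key : ∀ n k : ℕ, K * ‖y n - y k‖^2 ≤ 1/(n+1)/2 + 1/(k+1)/2 := by
    intro n k
    have h1 := hmid (y n) (y k)
    have h2 := hm ((2:ℝ)⁻¹ • (y n + y k))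
    have h3 := hy n; have h4 := hy k
    linarith
  have hcauchy : CauchySeq y := by
    rw [Metric.cauchySeq_iff']
    intro ε hε
    obtain ⟨N, hN⟩ := exists_nat_gt (1/(K*ε^2))
    refine ⟨N, fun n hn => ?_⟩
    rw [dist_eq_norm]
    have h1 := key n N
    have hNn : 1/((n:ℝ)+1) ≤ 1/((N:ℝ)+1) := by
      apply one_div_le_one_div_of_le (by positivity)
      have : (N:ℝ) ≤ n := Nat.cast_le.mpr hn
      linarith
    have hKε : 0 < K * ε^2 := by positivity
    have hNε : 1/((N:ℝ)+1) < K * ε^2 := by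
      rw [div_lt_iff₀ (by positivity)]
      have h5 : 1/(K*ε^2) < (N:ℝ) + 1 := by linarith
      rw [div_lt_iff₀ hKε] at h5
      nlinarith
    have hsq : ‖y n - y N‖^2 < ε^2 := by nlinarith
    nlinarith [norm_nonneg (y n - y N)]
  obtain ⟨p, hp⟩ := cauchySeq_tendsto_of_complete hcauchy
  have htend : Filter.Tendsto (fun n => f (y n)) Filter.atTop (nhds (f p)) :=
    (hf.tendsto p).comp hp
  have hub : Filter.Tendsto (fun n : ℕ => m + 1/((n:ℝ)+1)) Filter.atTop (nhds m) := by
    have := tendsto_one_div_add_atTop_nhds_zero_nat (𝕜 := ℝ)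
    simpa using Filter.Tendsto.const_add m this
  have hfp : f p ≤ m :=
    le_of_tendsto_of_tendsto' htend hub (fun n => le_of_lt (hy n))
  exact ⟨p, fun z => le_trans hfp (hm z)⟩

set_option maxHeartbeats 2000000 in
/-- The Moreau envelope of a convex continuous function on a real Hilbert
space is convex and continuously (Fréchet) differentiable. -/
theorem moreau_envelope_convex_and_C1
    {H : Type*} [NormedAddCommGroup H] [InnerProductSpace ℝ H] [CompleteSpace H]
    (u : H → ℝ) (hconv : ConvexOn ℝ Set.univ u) (hcont : Continuous u)
    (t : ℝ) (ht : 0 < t)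
    (env : H → ℝ) (henv : ∀ x : H, env x = ⨅ y : H, (u y + ‖x - y‖ ^ 2 / (2 * t))) :
    ConvexOn ℝ Set.univ env ∧ ContDiff ℝ 1 env := by
  obtain ⟨φ, c, hφ⟩ := aux_affine_minorant' u hconv hcont
  set F : H → H → ℝ := fun x y => u y + ‖x - y‖ ^ 2 / (2 * t) with hF
  -- bounded below
  have hbdd : ∀ x, BddBelow (Set.range (F x)) := by
    intro x
    refine ⟨c - ‖φ‖ * ‖x‖ - ‖φ‖^2 * t / 2, ?_⟩
    rintro _ ⟨y, rfl⟩
    have h1 : c + φ y ≤ u y := hφ y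
    have h2 : |φ y| ≤ ‖φ‖ * ‖y‖ := by
      have := φ.le_opNorm y
      rwa [Real.norm_eq_abs] at this
    have h3 : ‖y‖ ≤ ‖x‖ + ‖x - y‖ := by
      calc ‖y‖ = ‖x - (x - y)‖ := by rw [sub_sub_cancel]
        _ ≤ ‖x‖ + ‖x - y‖ := norm_sub_le _ _
    have h4 : ‖φ‖ * ‖x - y‖ - ‖φ‖^2 * t / 2 ≤ ‖x - y‖^2 / (2*t) := by
      rw [← sub_nonneg]
      have key : ‖x - y‖^2 / (2*t) - (‖φ‖ * ‖x - y‖ - ‖φ‖^2 * t / 2)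
          = (‖x - y‖ - ‖φ‖ * t)^2 / (2*t) := by field_simp; ring
      rw [key]
      positivity
    have h5 : 0 ≤ ‖φ‖ := norm_nonneg _
    simp only [hF]
    nlinarith [abs_nonneg (φ y), neg_abs_le (φ y)]
  -- midpoint strong convexity
  have hmid : ∀ x y z, F x ((2:ℝ)⁻¹ • (y + z)) ≤ (F x y + F x z)/2 - (1/(8*t)) * ‖y - z‖^2 := by
    intro x y z
    have hut : u ((2:ℝ)⁻¹ • y + (2:ℝ)⁻¹ • z) ≤ 2⁻¹ * u y + 2⁻¹ * u z :=
      hconv.2 (mem_univ y) (mem_univ z) (by norm_num) (by norm_num) (by norm_num)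
    have hsm : (2:ℝ)⁻¹ • (y + z) = (2:ℝ)⁻¹ • y + (2:ℝ)⁻¹ • z := smul_add _ _ _
    have hvec : x - (2:ℝ)⁻¹ • (y + z) = (2:ℝ)⁻¹ • ((x - y) + (x - z)) := by module
    have hN : ‖x - (2:ℝ)⁻¹ • (y + z)‖^2 = (‖x - y‖^2 + ‖x - z‖^2)/2 - ‖y - z‖^2/4 := by
      rw [hvec, norm_smul]
      have h1 : ‖(x - y) + (x - z)‖^2 = ‖x-y‖^2 + 2 * inner ℝ (x-y) (x-z) + ‖x-z‖^2 :=
        norm_add_sq_real _ _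
      have h2 : ‖y - z‖^2 = ‖x-z‖^2 - 2 * inner ℝ (x-y) (x-z) + ‖x-y‖^2 := by
        rw [show y - z = (x - z) - (x - y) by abel, norm_sub_sq_real, real_inner_comm]
      rw [Real.norm_eq_abs, mul_pow, sq_abs]
      nlinarith
    simp only [hF]
    rw [hN, hsm]
    have key : ((‖x - y‖^2 + ‖x - z‖^2)/2 - ‖y - z‖^2/4)/(2*t)
        = (‖x - y‖^2/(2*t) + ‖x - z‖^2/(2*t))/2 - (1/(8*t)) * ‖y - z‖^2 := by
      field_simp; ring
    rw [key]
    linarith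
  -- existence of proximal points
  have hFcont : ∀ x, Continuous (F x) := by
    intro x
    exact hcont.add (((continuous_const.sub continuous_id).norm.pow 2).div_const _)
  have hexists : ∀ x : H, ∃ p, ∀ y, F x p ≤ F x y := by
    intro x
    exact aux_exists_min' (F x) (hFcont x) (hbdd x) (1/(8*t)) (by positivity) (hmid x)
  choose prox hprox using hexists
  have henv' : ∀ x, env x = F x (prox x) := by
    intro x
    rw [henv x]
    exact le_antisymm (ciInf_le (hbdd x) (prox x)) (le_ciInf (hprox x))
  -- quadratic growth at the minimizer
  have hgrowth : ∀ x y, F x (prox x) + (1/(4*t)) * ‖y - prox x‖^2 ≤ F x y := by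
    intro x y
    have h1 := hmid x y (prox x)
    have h2 := hprox x ((2:ℝ)⁻¹ • (y + prox x))
    have e : 1/(4*t) = 2 * (1/(8*t)) := by field_simp; ring
    rw [e]
    linarith
  -- Lipschitz property of prox
  have hlip : ∀ x x', ‖prox x - prox x'‖ ≤ 2 * ‖x - x'‖ := by
    intro x x'
    have h1 := hgrowth x (prox x')
    have h2 := hgrowth x' (prox x)
    set p := prox x with hp
    set q := prox x' with hq
    have hnormsym : ‖p - q‖ ^ 2 = ‖q - p‖ ^ 2 := by rw [norm_sub_rev]
    -- multiply out the F's
    have h3 : ‖x - p‖^2 + ‖x' - q‖^2 + ‖q - p‖^2 / 2 + ‖p - q‖^2 / 2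
        ≤ ‖x - q‖^2 + ‖x' - p‖^2 := by
      have e3 : ∀ A B : ℝ, A/(2*t) ≤ B/(2*t) → A ≤ B := by
        intro A B hAB
        have := mul_le_mul_of_nonneg_left hAB (le_of_lt (by positivity : (0:ℝ) < 2*t))
        rwa [mul_div_cancel₀ _ (by positivity : (2*t:ℝ) ≠ 0),
          mul_div_cancel₀ _ (by positivity : (2*t:ℝ) ≠ 0)] at this
      apply e3
      have eL : (‖x - p‖^2 + ‖x' - q‖^2 + ‖q - p‖^2/2 + ‖p - q‖^2/2)/(2*t)
          = ‖x - p‖^2/(2*t) + ‖x' - q‖^2/(2*t)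
            + (1/(4*t))*‖q - p‖^2 + (1/(4*t))*‖p - q‖^2 := by
        field_simp; ring
      have eR : (‖x - q‖^2 + ‖x' - p‖^2)/(2*t) = ‖x - q‖^2/(2*t) + ‖x' - p‖^2/(2*t) := by
        field_simp
      simp only [hF] at h1 h2
      rw [eL, eR]
      linarith
    have hid : ‖x - q‖^2 - ‖x' - q‖^2 - ‖x - p‖^2 + ‖x' - p‖^2
        = 2 * inner ℝ (x - x') (p - q) := by
      simp only [norm_sub_sq_real, inner_sub_left, inner_sub_right]
      ring_nf
    have hsq : ‖p - q‖^2 ≤ 2 * inner ℝ (x - x') (p - q) := by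
      linarith [hnormsym, h3, hid]
    have hcs : (inner ℝ (x - x') (p - q) : ℝ) ≤ ‖x - x'‖ * ‖p - q‖ := real_inner_le_norm _ _
    nlinarith [norm_nonneg (p - q), norm_nonneg (x - x')]
  constructor
  · -- convexity
    refine ⟨convex_univ, ?_⟩
    intro x₁ _ x₂ _ a b ha hb hab
    set p₁ := prox x₁
    set p₂ := prox x₂
    have h1 : env (a • x₁ + b • x₂) ≤ F (a • x₁ + b • x₂) (a • p₁ + b • p₂) := by
      rw [henv]
      exact ciInf_le (hbdd _) _
    have h2 : u (a • p₁ + b • p₂) ≤ a * u p₁ + b * u p₂ :=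
      hconv.2 (mem_univ _) (mem_univ _) ha hb hab
    have h3 : ‖(a • x₁ + b • x₂) - (a • p₁ + b • p₂)‖^2
        ≤ a * ‖x₁ - p₁‖^2 + b * ‖x₂ - p₂‖^2 := by
      have e : (a • x₁ + b • x₂) - (a • p₁ + b • p₂) = a • (x₁ - p₁) + b • (x₂ - p₂) := by
        module
      rw [e]
      have h4 : ‖a • (x₁ - p₁) + b • (x₂ - p₂)‖ ≤ a * ‖x₁ - p₁‖ + b * ‖x₂ - p₂‖ := by
        refine le_trans (norm_add_le _ _) ?_
        rw [norm_smul, norm_smul, Real.norm_eq_abs, Real.norm_eq_abs,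
          abs_of_nonneg ha, abs_of_nonneg hb]
      have h5 : 0 ≤ a * ‖x₁ - p₁‖ + b * ‖x₂ - p₂‖ := by positivity
      nlinarith [sq_nonneg (‖x₁ - p₁‖ - ‖x₂ - p₂‖), norm_nonneg (a • (x₁ - p₁) + b • (x₂ - p₂)),
        mul_nonneg ha hb, norm_nonneg (x₁ - p₁), norm_nonneg (x₂ - p₂)]
    have h6 : ‖(a • x₁ + b • x₂) - (a • p₁ + b • p₂)‖^2/(2*t)
        ≤ (a * ‖x₁ - p₁‖^2 + b * ‖x₂ - p₂‖^2)/(2*t) := by gcongr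
    have h7 : (a * ‖x₁ - p₁‖^2 + b * ‖x₂ - p₂‖^2)/(2*t)
        = a * (‖x₁ - p₁‖^2/(2*t)) + b * (‖x₂ - p₂‖^2/(2*t)) := by
      field_simp
    rw [henv' x₁, henv' x₂]
    simp only [hF] at h1 ⊢
    simp only [smul_eq_mul]
    linarith [h1, h2, h6, h7]
  · -- C¹
    have hdiff : ∀ x : H, HasFDerivAt env (innerSL ℝ ((1/t) • (x - prox x))) x := by
      intro x
      set p := prox x with hp
      rw [hasFDerivAt_iff_isLittleO_nhds_zero]
      rw [Asymptotics.isLittleO_iff]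
      intro ε hε
      filter_upwards [Metric.ball_mem_nhds (0:H) (show (0:ℝ) < ε * t / 4 by positivity)]
        with h hball'
      have hball : ‖h‖ < ε * t / 4 := by rwa [Metric.mem_ball, dist_zero_right] at hball'
      set x' := x + h with hx'
      set q := prox x'
      have hh : x' - x = h := by rw [hx']; abel
      have hinner : (innerSL ℝ ((1/t) • (x - p))) h = (1/t) * inner ℝ (x - p) h := by
        simp [real_inner_smul_left, inner_sub_left]
      -- upper bound
      have hupper : env x' - env x - (1/t) * inner ℝ (x - p) h ≤ ‖h‖^2/(2*t) := by
        have ha : env x' ≤ u p + ‖x' - p‖^2/(2*t) := by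
          rw [henv x']
          exact ciInf_le (hbdd x') p
        have hb : env x = u p + ‖x - p‖^2/(2*t) := henv' x
        have hc : ‖x' - p‖^2 = ‖x - p‖^2 + 2 * inner ℝ (x - p) h + ‖h‖^2 := by
          rw [show x' - p = (x - p) + h by rw [hx']; abel]
          exact norm_add_sq_real _ _
        have hd : (‖x - p‖^2 + 2 * inner ℝ (x - p) h + ‖h‖^2)/(2*t)
            = ‖x - p‖^2/(2*t) + (1/t) * inner ℝ (x - p) h + ‖h‖^2/(2*t) := by
          field_simp
        rw [hc, hd] at ha
        linarith
      -- lower bound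
      have hlower : -(3/t) * ‖h‖^2 ≤ env x' - env x - (1/t) * inner ℝ (x - p) h := by
        have ha : env x ≤ u q + ‖x - q‖^2/(2*t) := by
          rw [henv x]
          exact ciInf_le (hbdd x) q
        have hb : env x' = u q + ‖x' - q‖^2/(2*t) := henv' x'
        have hc : ‖x - q‖^2 = ‖x' - q‖^2 - 2 * inner ℝ (x' - q) h + ‖h‖^2 := by
          rw [show x - q = (x' - q) - h by rw [hx']; abel]
          exact norm_sub_sq_real _ _
        have hd : (‖x' - q‖^2 - 2 * inner ℝ (x' - q) h + ‖h‖^2)/(2*t)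
            = ‖x' - q‖^2/(2*t) - (1/t) * inner ℝ (x' - q) h + ‖h‖^2/(2*t) := by
          field_simp
        rw [hc, hd] at ha
        have he : (inner ℝ (x' - q) h : ℝ)
            = inner ℝ (x - p) h + ‖h‖^2 - inner ℝ (q - p) h := by
          rw [show x' - q = (x - p) + h - (q - p) by rw [hx']; abel,
            inner_sub_left, inner_add_left, real_inner_self_eq_norm_sq]
        have hf1 : (inner ℝ (q - p) h : ℝ) ≤ 2 * ‖h‖^2 := by
          have h1 : (inner ℝ (q - p) h : ℝ) ≤ ‖q - p‖ * ‖h‖ := real_inner_le_norm _ _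
          have h2 : ‖q - p‖ ≤ 2 * ‖h‖ := by
            have := hlip x' x
            rwa [hh] at this
          nlinarith [norm_nonneg h]
        have h0 : (0:ℝ) < 1/t := by positivity
        have hq2 : (1/t) * inner ℝ (x' - q) h
            ≥ (1/t) * inner ℝ (x - p) h + (1/t) * ‖h‖^2 - (1/t) * (2 * ‖h‖^2) := by
          rw [he]
          have := mul_le_mul_of_nonneg_left hf1 (le_of_lt h0)
          nlinarith [this]
        have hhalf : ‖h‖^2/(2*t) ≤ (1/t) * ‖h‖^2 := by
          rw [div_le_iff₀ (by positivity)]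
          have h1 : (0:ℝ) ≤ ‖h‖^2 := sq_nonneg _
          have h2 : (1/t) * ‖h‖^2 * (2*t) = 2 * ‖h‖^2 := by field_simp
          linarith [h2]
        have k1 : env x ≤ env x' - 1/t * inner ℝ (x' - q) h + ‖h‖^2/(2*t) := by
          linarith [ha, hb]
        have hpos : 0 ≤ 1/t * ‖h‖^2 := mul_nonneg (le_of_lt h0) (sq_nonneg ‖h‖)
        ring_nf at k1 hq2 hhalf hpos ⊢
        linarith [k1, hq2, hhalf, hpos]
      have hb1 : ‖h‖^2/(2*t) ≤ ε * ‖h‖ := by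
        rw [div_le_iff₀ (by positivity)]
        nlinarith [norm_nonneg h]
      have hb2 : (3/t) * ‖h‖^2 ≤ ε * ‖h‖ := by
        have c1 : (3/t) * ‖h‖^2 ≤ (3/t) * ((ε * t/4) * ‖h‖) := by
          have hn : (0:ℝ) ≤ 3/t * ‖h‖ := by positivity
          nlinarith [mul_le_mul_of_nonneg_left (le_of_lt hball) hn]
        calc (3/t) * ‖h‖^2 ≤ (3/t) * ((ε * t/4) * ‖h‖) := c1
          _ = (3*ε/4) * ‖h‖ := by field_simp
          _ ≤ ε * ‖h‖ := by nlinarith [norm_nonneg h]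
      rw [hinner, Real.norm_eq_abs, abs_le]
      constructor
      · nlinarith [hlower, hb2]
      · nlinarith [hupper, hb1]
    have hproxlip : Continuous prox := by
      have : LipschitzWith 2 prox := by
        apply LipschitzWith.of_dist_le_mul
        intro x x'
        rw [dist_eq_norm, dist_eq_norm]
        simpa using hlip x x'
      exact this.continuous
    rw [contDiff_one_iff_fderiv]
    refine ⟨fun x => (hdiff x).differentiableAt, ?_⟩
    have hfd : fderiv ℝ env = fun x => innerSL ℝ ((1/t) • (x - prox x)) :=
      funext fun x => (hdiff x).fderiv
    rw [hfd]
    exact (innerSL ℝ).continuous.comp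
      ((continuous_id.sub hproxlip).const_smul _)
end

section
/- Let Ω ⊆ ℝⁿ (n ≥ 2) be a compact convex set with nonempty interior and let Γ = ∂Ω be its boundary. Let x be a point in the interior of Ω, and let x⁰ be a nearest point of x on cut(Γ), the closure of the medial axis of Γ. Then d_Γ(x⁰) ≥ d_Γ(x), i.e., the distance from x⁰ to Γ is at least the distance from x to Γ. (This is the Euclidean case of the theorem that for a d-convex hypersurface in a Cartan–Hadamard manifold, the footprint of any interior point on the cut locus is at least as far from the hypersurface as the point itself; in ℝⁿ the signed distance function of a convex hypersurface is convex, so every convex hypersurface is d-convex.) -/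
/-- The medial axis of a set `X`: points having at least two nearest points on `X`. -/
def medialAxis {n : ℕ} (X : Set (EuclideanSpace ℝ (Fin n))) : Set (EuclideanSpace ℝ (Fin n)) :=
  {q | ∃ a ∈ X, ∃ b ∈ X, a ≠ b ∧
    ‖q - a‖ = Metric.infDist q X ∧ ‖q - b‖ = Metric.infDist q X}

/-- The cut locus of a set: the closure of its medial axis. -/
def cutLocus {n : ℕ} (X : Set (EuclideanSpace ℝ (Fin n))) : Set (EuclideanSpace ℝ (Fin n)) :=
  closure (medialAxis X)

open Metric Set Filter
open scoped RealInnerProductSpace Topology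
set_option maxHeartbeats 1600000

namespace CutProofAux

variable {n : ℕ}

local notation "E" => EuclideanSpace ℝ (Fin n)

lemma le_infDist' {s : Set E} (hs : s.Nonempty) {x : E} {b : ℝ}
    (h : ∀ y ∈ s, b ≤ dist x y) : b ≤ infDist x s := by
  by_contra hb
  push_neg at hb
  obtain ⟨y, hy, hlt⟩ := (infDist_lt_iff hs).1 hb
  exact absurd (h y hy) (by linarith)

lemma lipf {s : Set E} (a b : E) : infDist a s ≤ infDist b s + ‖a - b‖ := by
  simpa [dist_eq_norm] using infDist_le_infDist_add_dist (x := a) (y := b) (s := s)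

/-- crossing a closed set's frontier along a segment -/
lemma crossing {Ω : Set E} (hcl : IsClosed Ω) {z y : E} (hz : z ∈ Ω) (hy : y ∉ Ω) :
    ∃ c ∈ frontier Ω, ‖y - c‖ ≤ ‖y - z‖ ∧ ‖c - z‖ ≤ ‖y - z‖ := by
  set γ : ℝ → E := fun t => z + t • (y - z) with hγ
  have hcont : Continuous γ := by
    apply continuous_const.add
    exact continuous_id.smul continuous_const
  set S : Set ℝ := Icc (0:ℝ) 1 ∩ γ ⁻¹' Ω with hS
  have hS0 : (0:ℝ) ∈ S := by
    constructor
    · exact ⟨le_refl _, zero_le_one⟩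
    · simp [hγ, hz]
  have hSne : S.Nonempty := ⟨0, hS0⟩
  have hScl : IsClosed S := isClosed_Icc.inter (hcl.preimage hcont)
  have hScpt : IsCompact S := isCompact_Icc.of_isClosed_subset hScl inter_subset_left
  set t₁ := sSup S with ht₁
  have ht₁S : t₁ ∈ S := hScpt.sSup_mem hSne
  have ht₁0 : 0 ≤ t₁ := ht₁S.1.1
  have ht₁1 : t₁ ≤ 1 := ht₁S.1.2
  have hcΩ : γ t₁ ∈ Ω := ht₁S.2
  have ht₁lt1 : t₁ < 1 := by
    rcases lt_or_eq_of_le ht₁1 with h | h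
    · exact h
    · exfalso; apply hy
      have : γ t₁ = y := by rw [h]; simp [hγ]
      rwa [this] at hcΩ
  have hnotint : γ t₁ ∉ interior Ω := by
    intro hint
    have h1 : Ω ∈ nhds (γ t₁) := mem_interior_iff_mem_nhds.mp hint
    have h2 : γ ⁻¹' Ω ∈ nhds t₁ := hcont.continuousAt.preimage_mem_nhds h1
    obtain ⟨δ, hδ, hball⟩ := Metric.mem_nhds_iff.mp h2
    set t₂ := min ((t₁ + 1)/2) (t₁ + δ/2) with ht₂
    have ht₂gt : t₁ < t₂ := by
      apply lt_min <;> linarith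
    have ht₂le1 : t₂ ≤ 1 := le_trans (min_le_left _ _) (by linarith)
    have ht₂ball : t₂ ∈ Metric.ball t₁ δ := by
      rw [Metric.mem_ball, Real.dist_eq, abs_of_pos (by linarith)]
      calc t₂ - t₁ ≤ (t₁ + δ/2) - t₁ := by
            have := min_le_right ((t₁ + 1)/2) (t₁ + δ/2); linarith
        _ < δ := by linarith
    have ht₂S : t₂ ∈ S := ⟨⟨by linarith, ht₂le1⟩, hball ht₂ball⟩
    have : t₂ ≤ t₁ := le_csSup hScpt.bddAbove ht₂S
    linarith
  refine ⟨γ t₁, ?_, ?_, ?_⟩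
  · rw [hcl.frontier_eq]; exact ⟨hcΩ, hnotint⟩
  · have h1 : y - γ t₁ = (1 - t₁) • (y - z) := by
      simp only [hγ]
      module
    rw [h1, norm_smul, Real.norm_eq_abs, abs_of_nonneg (by linarith)]
    nlinarith [norm_nonneg (y - z)]
  · have h1 : γ t₁ - z = t₁ • (y - z) := by
      simp only [hγ]; module
    rw [h1, norm_smul, Real.norm_eq_abs, abs_of_nonneg ht₁0]
    nlinarith [norm_nonneg (y - z)]

lemma mem_of_dist_lt_infDist_compl {Ω : Set E} {q z : E}
    (h : dist q z < infDist q Ωᶜ) : z ∈ Ω := by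
  by_contra hz
  exact absurd (infDist_le_dist_of_mem (s := Ωᶜ) hz) (by linarith)

lemma infDist_frontier_eq_compl {Ω : Set E} (hcl : IsClosed Ω)
    (hΓne : (frontier Ω).Nonempty) (hcne : Ωᶜ.Nonempty) {q : E} (hq : q ∈ Ω) :
    infDist q (frontier Ω) = infDist q Ωᶜ := by
  apply le_antisymm
  · apply le_infDist' hcne
    intro y hy
    obtain ⟨c, hcΓ, _, h2⟩ := crossing hcl hq hy
    calc infDist q (frontier Ω) ≤ dist q c := infDist_le_dist_of_mem hcΓ
      _ = ‖c - q‖ := by rw [dist_eq_norm, norm_sub_rev]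
      _ ≤ ‖y - q‖ := h2
      _ = dist q y := by rw [dist_eq_norm, norm_sub_rev]
  · have h1 : frontier Ω ⊆ closure Ωᶜ := by
      rw [← frontier_compl]; exact frontier_subset_closure
    calc infDist q Ωᶜ = infDist q (closure Ωᶜ) := (infDist_closure).symm
      _ ≤ infDist q (frontier Ω) := infDist_le_infDist_of_subset h1 hΓne


/-- concavity of distance to the frontier on a convex body -/
lemma concave_f {Ω : Set E} (hconv : Convex ℝ Ω) (hcl : IsClosed Ω)
    (hΓne : (frontier Ω).Nonempty) (hcne : Ωᶜ.Nonempty)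
    (heq : ∀ q ∈ Ω, infDist q (frontier Ω) = infDist q Ωᶜ)
    {a b : E} (ha : a ∈ Ω) (hb : b ∈ Ω) {t : ℝ} (ht0 : 0 ≤ t) (ht1 : t ≤ 1) :
    (1 - t) * infDist a (frontier Ω) + t * infDist b (frontier Ω)
      ≤ infDist ((1 - t) • a + t • b) (frontier Ω) := by
  set fa := infDist a (frontier Ω) with hfa
  set fb := infDist b (frontier Ω) with hfb
  set S := (1 - t) * fa + t * fb with hS
  have hfa0 : 0 ≤ fa := infDist_nonneg
  have hfb0 : 0 ≤ fb := infDist_nonneg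
  have hcombo : (1 - t) • a + t • b ∈ Ω := hconv ha hb (by linarith) ht0 (by ring)
  rw [heq _ hcombo]
  apply le_infDist' hcne
  intro y hy
  by_contra hlt
  push_neg at hlt
  have hS0 : 0 < S := lt_of_le_of_lt dist_nonneg hlt
  set d := y - ((1 - t) • a + t • b) with hd
  have hdn : ‖d‖ < S := by
    rw [hd, ← dist_eq_norm, dist_comm]; exact hlt
  -- a' and b'
  have key : ∀ (c : E) (fc : ℝ), c ∈ Ω → infDist c (frontier Ω) = fc → 0 ≤ fc →
      c + (fc / S) • d ∈ Ω := by
    intro c fc hcΩ hfc hfc0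
    rcases eq_or_lt_of_le hfc0 with h0 | hpos
    · simpa [← h0] using hcΩ
    · apply mem_of_dist_lt_infDist_compl (q := c)
      rw [← heq _ hcΩ, hfc]
      rw [dist_eq_norm]
      have : c - (c + (fc / S) • d) = -((fc / S) • d) := by module
      rw [this, norm_neg, norm_smul, Real.norm_eq_abs, abs_of_nonneg (by positivity)]
      calc fc / S * ‖d‖ < fc / S * S := by
            apply mul_lt_mul_of_pos_left hdn (by positivity)
        _ = fc := by field_simp
  have ha' := key a fa ha rfl hfa0
  have hb' := key b fb hb rfl hfb0
  have hy' : y ∈ Ω := by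
    have hrep : (1 - t) • (a + (fa / S) • d) + t • (b + (fb / S) • d) = y := by
      have h1 : (1 - t) • (a + (fa / S) • d) + t • (b + (fb / S) • d)
          = ((1 - t) • a + t • b) + (((1 - t) * (fa / S) + t * (fb / S)) • d) := by
        module
      rw [h1]
      have h2 : (1 - t) * (fa / S) + t * (fb / S) = 1 := by
        field_simp [hS]
        rw [hS]
      rw [h2, one_smul, hd]; module
    rw [← hrep]
    exact hconv ha' hb' (by linarith) ht0 (by ring)
  exact hy hy'


/-- medial points lie in `Ω` and have positive distance to the frontier -/
lemma medial_sub {Ω : Set E} (hcomp : IsCompact Ω) (hconv : Convex ℝ Ω)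
    (hΓne : (frontier Ω).Nonempty) {q : E} (hq : q ∈ medialAxis (frontier Ω)) :
    q ∈ Ω ∧ 0 < infDist q (frontier Ω) := by
  obtain ⟨a, haΓ, b, hbΓ, hab, hqa, hqb⟩ := hq
  have hcl := hcomp.isClosed
  have hΓsub : frontier Ω ⊆ Ω := hcl.frontier_subset
  have hfpos : 0 < infDist q (frontier Ω) := by
    rcases lt_or_eq_of_le (infDist_nonneg : (0:ℝ) ≤ infDist q (frontier Ω)) with h | h
    · exact h
    · exfalso
      apply hab
      have e1 : q = a := by
        have h1 : ‖q - a‖ = 0 := by rw [hqa, ← h]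
        have := norm_sub_eq_zero_iff.mp h1; exact this
      have e2 : q = b := by
        have h1 : ‖q - b‖ = 0 := by rw [hqb, ← h]
        exact norm_sub_eq_zero_iff.mp h1
      rw [← e1, ← e2]
  refine ⟨?_, hfpos⟩
  by_contra hqΩ
  have hΩne : Ω.Nonempty := hΓne.mono hΓsub
  obtain ⟨z, hzΩ, hz⟩ := hcomp.exists_infDist_eq_dist hΩne q
  obtain ⟨c, hcΓ, hc1, _⟩ := crossing hcl hzΩ hqΩ
  -- chain of equalities
  have h1 : infDist q (frontier Ω) ≤ infDist q Ω := by
    calc infDist q (frontier Ω) ≤ dist q c := infDist_le_dist_of_mem hcΓ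
      _ = ‖q - c‖ := dist_eq_norm _ _
      _ ≤ ‖q - z‖ := hc1
      _ = dist q z := (dist_eq_norm _ _).symm
      _ = infDist q Ω := hz.symm
  have h2 : infDist q Ω ≤ infDist q (frontier Ω) := by
    calc infDist q Ω ≤ dist q a := infDist_le_dist_of_mem (hΓsub haΓ)
      _ = ‖q - a‖ := dist_eq_norm _ _
      _ = infDist q (frontier Ω) := hqa
  have heq : infDist q Ω = infDist q (frontier Ω) := le_antisymm h2 h1
  -- midpoint beats both
  set m := (1/2 : ℝ) • a + (1/2 : ℝ) • b with hm
  have hmΩ : m ∈ Ω := hconv (hΓsub haΓ) (hΓsub hbΓ) (by norm_num) (by norm_num) (by norm_num)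
  have hmid : q - m = (1/2 : ℝ) • ((q - a) + (q - b)) := by rw [hm]; module
  have habnorm : (0:ℝ) < ‖a - b‖ := by
    rw [norm_pos_iff, sub_ne_zero]; exact hab
  have hab2 : a - b = (q - b) - (q - a) := by module
  have e2 := norm_add_sq_real (q - a) (q - b)
  have e3 := norm_sub_sq_real (q - b) (q - a)
  have e4 : ⟪q - b, q - a⟫ = ⟪q - a, q - b⟫ := real_inner_comm _ _
  have e5 : ‖a - b‖ = ‖(q - b) - (q - a)‖ := by rw [← hab2]
  have e1 : ‖q - m‖ ^ 2 = 1 / 4 * ‖(q - a) + (q - b)‖ ^ 2 := by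
    rw [hmid, norm_smul, Real.norm_eq_abs, mul_pow]
    norm_num
  have h5 : ‖q - a‖ = infDist q (frontier Ω) := hqa
  have h6 : ‖q - b‖ = infDist q (frontier Ω) := hqb
  have hnormsq : ‖q - m‖ ^ 2 < (infDist q (frontier Ω)) ^ 2 := by
    rw [e5] at habnorm
    nlinarith [habnorm, sq_nonneg (‖(q - b) - (q - a)‖)]
  have h7 : infDist q Ω ≤ dist q m := infDist_le_dist_of_mem hmΩ
  have h8 : dist q m = ‖q - m‖ := dist_eq_norm _ _
  have h9 : ‖q - m‖ < infDist q (frontier Ω) := by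
    nlinarith [norm_nonneg (q - m), hfpos]
  rw [heq, h8] at h7
  linarith


lemma frontier_nonempty {Ω : Set E} (hn : 2 ≤ n) (hcomp : IsCompact Ω)
    (hint : (interior Ω).Nonempty) : (frontier Ω).Nonempty := by
  have hnt : Nontrivial (EuclideanSpace ℝ (Fin n)) := by
    refine ⟨0, EuclideanSpace.single ⟨0, by omega⟩ 1, ?_⟩
    intro h
    have := congrFun (congrArg (fun v : EuclideanSpace ℝ (Fin n) => (v : Fin n → ℝ)) h) ⟨0, by omega⟩
    simp [EuclideanSpace.single_apply] at this
  by_contra hfe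
  rw [not_nonempty_iff_eq_empty] at hfe
  have hclopen : IsClopen Ω := isClopen_iff_frontier_eq_empty.mpr hfe
  rcases isClopen_iff.mp hclopen with h | h
  · obtain ⟨p, hp⟩ := hint
    rw [h] at hp
    simpa using interior_subset hp
  · have : NoncompactSpace (EuclideanSpace ℝ (Fin n)) := by infer_instance
    exact hcomp.ne_univ h


/-- The proximal step lemma: from a medial point, the proximal point is again medial,
moves a controlled amount, and drifts towards any point where `f` is larger. -/
lemma prox_step {Ω : Set E} (hcomp : IsCompact Ω) (hconv : Convex ℝ Ω)
    (hΓne : (frontier Ω).Nonempty) (hcne : Ωᶜ.Nonempty) (hΩne : Ω.Nonempty)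
    (heq : ∀ q ∈ Ω, infDist q (frontier Ω) = infDist q Ωᶜ)
    (hconc : ∀ a ∈ Ω, ∀ b ∈ Ω, ∀ t : ℝ, 0 ≤ t → t ≤ 1 →
      (1 - t) * infDist a (frontier Ω) + t * infDist b (frontier Ω)
        ≤ infDist ((1 - t) • a + t • b) (frontier Ω))
    (hmedsub : ∀ q ∈ medialAxis (frontier Ω), q ∈ Ω ∧ 0 < infDist q (frontier Ω))
    {x c : E} (hxΩ : x ∈ Ω) (hc : c ∈ medialAxis (frontier Ω))
    {lam : ℝ} (hl0 : 0 < lam) (hlf : lam < infDist c (frontier Ω)) :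
    ∃ c' ∈ medialAxis (frontier Ω),
      infDist c (frontier Ω) ≤ infDist c' (frontier Ω) ∧
      infDist c' (frontier Ω) ≤ infDist c (frontier Ω) + 2*lam ∧
      lam * (infDist x (frontier Ω) - infDist c' (frontier Ω)) ≤ ⟪c' - c, x - c'⟫ := by
  classical
  set Γ := frontier Ω with hΓ
  set f : E → ℝ := fun q => infDist q Γ with hf
  have hΓcl : IsClosed Γ := isClosed_frontier
  have hΓcpt : IsCompact Γ := hcomp.of_isClosed_subset hΓcl hcomp.isClosed.frontier_subset
  obtain ⟨hcΩ, hfc⟩ := hmedsub c hc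
  -- the proximal functional
  set G : E → ℝ := fun y => ‖y - c‖^2/(2*lam) - f y with hG
  have hGcont : ContinuousOn G Ω := by
    apply ContinuousOn.sub
    · exact (((continuous_id.sub continuous_const).norm.pow 2).div_const _).continuousOn
    · exact (continuous_infDist_pt Γ).continuousOn
  obtain ⟨w, hwΩ, hwmin⟩ := hcomp.exists_isMinOn hΩne hGcont
  have hminon := isMinOn_iff.mp hwmin
  have hp4 : ∀ y ∈ Ω, f y ≤ f w + (‖y - c‖^2 - ‖w - c‖^2)/(2*lam) := by
    intro y hy
    have h' : ‖w - c‖^2/(2*lam) - f w ≤ ‖y - c‖^2/(2*lam) - f y := hminon y hy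
    rw [sub_div]
    linarith
  have hp1 : f c + ‖w - c‖^2/(2*lam) ≤ f w := by
    have h' : ‖w - c‖^2/(2*lam) - f w ≤ ‖c - c‖^2/(2*lam) - f c := hminon c hcΩ
    have hz : ‖c - c‖ = 0 := by simp
    rw [hz] at h'
    norm_num at h'
    linarith
  have hfcw : f c ≤ f w := by
    have h0 : (0:ℝ) ≤ ‖w - c‖^2/(2*lam) := by positivity
    linarith
  have hfw : 0 < f w := lt_of_lt_of_le hfc hfcw
  have hlfw : lam < f w := lt_of_lt_of_le hlf hfcw
  have hstep2 : ‖w - c‖ ≤ 2*lam := by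
    have h2l : (0:ℝ) < 2*lam := by linarith
    have h3 : ‖w - c‖^2/(2*lam) ≤ ‖w - c‖ := by linarith [lipf (s := Γ) w c]
    rw [div_le_iff₀ h2l] at h3
    nlinarith [norm_nonneg (w - c)]
  -- w is in the interior
  have hwnotΓ : w ∉ Γ := by
    intro hwΓ
    have : f w = 0 := infDist_zero_of_mem hwΓ
    linarith
  have hwint : w ∈ interior Ω := by
    by_contra hni
    apply hwnotΓ
    show w ∈ frontier Ω
    rw [hcomp.isClosed.frontier_eq]
    exact ⟨hwΩ, hni⟩
  obtain ⟨rr, hrr, hball⟩ : ∃ rr > 0, Metric.ball w rr ⊆ Ω :=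
    Metric.mem_nhds_iff.mp (mem_interior_iff_mem_nhds.mp hwint)
  -- w is medial
  have hwmed : w ∈ medialAxis Γ := by
    by_contra hnm
    obtain ⟨y₀, hy₀Γ, hy₀⟩ := hΓcpt.exists_infDist_eq_dist hΓne w
    have huniq : ∀ y' ∈ Γ, dist w y' = f w → y' = y₀ := by
      intro y' h1 h2
      by_contra hne
      exact hnm ⟨y', h1, y₀, hy₀Γ, hne,
        by rw [← dist_eq_norm]; exact h2, by rw [← dist_eq_norm]; exact hy₀.symm⟩
    set u : E := (f w)⁻¹ • (w - y₀) with hu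
    have hwy₀ : ‖w - y₀‖ = f w := by rw [← dist_eq_norm]; exact hy₀.symm
    have hunorm : ‖u‖ = 1 := by
      rw [hu, norm_smul, Real.norm_eq_abs, abs_of_pos (by positivity), hwy₀]
      field_simp
    set q : E := lam⁻¹ • (w - c) with hq
    -- main claim : q = u
    have hlambdaq : lam • q = w - c := by
      rw [hq, smul_smul]; field_simp; rw [one_smul]
    have hfwu0 : (f w) • u = w - y₀ := by
      rw [hu, smul_smul]; field_simp; rw [one_smul]
    have hlip : ∀ a b : E, |infDist a Γ - infDist b Γ| ≤ ‖a - b‖ := by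
      intro a b
      rw [abs_le]
      constructor
      · have := lipf (s := Γ) b a
        rw [norm_sub_rev] at this
        linarith
      · linarith [lipf (s := Γ) a b]
    have hqu : q = u := by
      by_contra hne
      set d : E := u - q with hd
      have hdnz : d ≠ 0 := by
        rw [hd, sub_ne_zero]
        exact fun h => hne h.symm
      have hdn : 0 < ‖d‖ := norm_pos_iff.mpr hdnz
      set C₀ : ℝ := min (rr/(2*(‖d‖+1))) 1 with hC₀
      have hC₀pos : 0 < C₀ := by
        apply lt_min _ one_pos
        positivity
      set τ : ℕ → ℝ := fun k => C₀ / (k+1) with hτ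
      have hτpos : ∀ k, 0 < τ k := by
        intro k
        apply div_pos hC₀pos
        positivity
      have hτle : ∀ k, τ k ≤ C₀ := by
        intro k
        rw [hτ]
        apply div_le_self (le_of_lt hC₀pos)
        have : (0:ℝ) ≤ (k:ℝ) := Nat.cast_nonneg k
        linarith
      have hτmem : ∀ k, w + τ k • d ∈ Ω := by
        intro k
        apply hball
        rw [Metric.mem_ball, dist_eq_norm]
        have : w + τ k • d - w = τ k • d := by module
        rw [this, norm_smul, Real.norm_eq_abs, abs_of_pos (hτpos k)]
        have h1 : τ k * ‖d‖ ≤ C₀ * ‖d‖ :=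
          mul_le_mul_of_nonneg_right (hτle k) (le_of_lt hdn)
        have h2 : C₀ * ‖d‖ ≤ (rr/(2*(‖d‖+1))) * ‖d‖ :=
          mul_le_mul_of_nonneg_right (min_le_left _ _) (le_of_lt hdn)
        have h3 : (rr/(2*(‖d‖+1))) * ‖d‖ < rr := by
          rw [div_mul_eq_mul_div, div_lt_iff₀ (by positivity)]
          nlinarith
        linarith
      have hfoot : ∀ k, ∃ y ∈ Γ, infDist (w + τ k • d) Γ = dist (w + τ k • d) y :=
        fun k => hΓcpt.exists_infDist_eq_dist hΓne _
      choose Y hYΓ hYdist using hfoot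
      -- the key inequality for each k
      have hkey : ∀ k, ⟪d, w - Y k⟫ / ‖w - Y k‖
          ≤ ⟪d, w - c⟫/lam + τ k * ‖d‖^2/(2*lam) := by
        intro k
        set t := τ k with htdef
        have ht0 : 0 < t := hτpos k
        set v : E := w - Y k with hv
        have hvnorm : f w ≤ ‖v‖ := by
          rw [hv, ← dist_eq_norm]
          exact infDist_le_dist_of_mem (hYΓ k)
        have hvpos : 0 < ‖v‖ := lt_of_lt_of_le hfw hvnorm
        have hA : f (w + t • d) = ‖v + t • d‖ := by
          have hY : f (w + t • d) = dist (w + t • d) (Y k) := by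
            rw [htdef]; exact hYdist k
          rw [hY, dist_eq_norm]
          congr 1
          rw [hv]; module
        have hB : ‖v‖^2 + t*⟪d, v⟫ ≤ ‖v + t • d‖ * ‖v‖ := by
          have h1 : ⟪v + t • d, v⟫ ≤ ‖v + t • d‖ * ‖v‖ := real_inner_le_norm _ _
          have h2 : ⟪v + t • d, v⟫ = ‖v‖^2 + t*⟪d, v⟫ := by
            rw [inner_add_left, real_inner_smul_left, real_inner_self_eq_norm_sq]
          linarith
        have hlow : ‖v‖ + t*⟪d, v⟫/‖v‖ ≤ ‖v + t • d‖ := by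
          rw [← sub_nonneg]
          have expand : ‖v + t • d‖ - (‖v‖ + t*⟪d, v⟫/‖v‖)
              = (‖v + t • d‖ * ‖v‖ - (‖v‖^2 + t*⟪d, v⟫))/‖v‖ := by
            field_simp
          rw [expand]
          apply div_nonneg _ (le_of_lt hvpos)
          linarith
        have hupper : f (w + t • d) ≤ f w + (2*t*⟪d, w - c⟫ + t^2*‖d‖^2)/(2*lam) := by
          have hp4' := hp4 _ (hτmem k)
          have hrw : w + t • d - c = (w - c) + t • d := by module
          have hexp : ‖w + t • d - c‖^2 = ‖w - c‖^2 + 2*t*⟪d, w - c⟫ + t^2*‖d‖^2 := by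
            rw [hrw, norm_add_sq_real, real_inner_smul_right, norm_smul, Real.norm_eq_abs,
              abs_of_pos ht0, real_inner_comm]
            ring
          rw [hexp] at hp4'
          have hnum : ‖w - c‖^2 + 2*t*⟪d, w - c⟫ + t^2*‖d‖^2 - ‖w - c‖^2
              = 2*t*⟪d, w - c⟫ + t^2*‖d‖^2 := by ring
          rw [hnum] at hp4'
          exact hp4'
        have hchain : ‖v‖ + t*⟪d, v⟫/‖v‖ ≤ ‖v‖ + (2*t*⟪d, w - c⟫ + t^2*‖d‖^2)/(2*lam) := by
          calc ‖v‖ + t*⟪d, v⟫/‖v‖ ≤ ‖v + t • d‖ := hlow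
            _ = f (w + t • d) := hA.symm
            _ ≤ f w + (2*t*⟪d, w - c⟫ + t^2*‖d‖^2)/(2*lam) := hupper
            _ ≤ ‖v‖ + (2*t*⟪d, w - c⟫ + t^2*‖d‖^2)/(2*lam) := by linarith
        have h2l : (0:ℝ) < 2*lam := by linarith
        have hfinal : t*⟪d, v⟫/‖v‖ ≤ (2*t*⟪d, w - c⟫ + t^2*‖d‖^2)/(2*lam) := by linarith
        -- divide by t
        rw [div_add_div _ _ (ne_of_gt hl0) (ne_of_gt h2l)]
        have hfinal' : t * ⟪d, v⟫ * (2*lam) ≤ (2*t*⟪d, w - c⟫ + t^2*‖d‖^2) * ‖v‖ := by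
          rw [div_le_div_iff₀ hvpos h2l] at hfinal
          linarith
        have ht' : 0 ≤ (⟪d, w - c⟫ * (2*lam) + lam * (t * ‖d‖^2)) / (lam * (2*lam)) - ⟪d, v⟫/‖v‖ := by
          have hexpand : (⟪d, w - c⟫ * (2*lam) + lam * (t * ‖d‖^2)) / (lam * (2*lam)) - ⟪d, v⟫/‖v‖
              = ((2*t*⟪d, w - c⟫ + t^2*‖d‖^2) * ‖v‖ - t * ⟪d, v⟫ * (2*lam)) / (t * (lam * (2*lam)) * ‖v‖) * lam := by
            field_simp
          rw [hexpand]
          apply mul_nonneg _ (le_of_lt hl0)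
          apply div_nonneg _ (by positivity)
          linarith
        linarith [ht']
      -- pass to the limit along a subsequence
      obtain ⟨ylim, hylimΓ, φ, hφ, hconv'⟩ := hΓcpt.tendsto_subseq hYΓ
      have hτtend : Filter.Tendsto τ Filter.atTop (nhds 0) := by
        have h1 : Filter.Tendsto (fun k : ℕ => 1/((k:ℝ)+1)) Filter.atTop (nhds 0) :=
          tendsto_one_div_add_atTop_nhds_zero_nat
        have h2 := h1.const_mul C₀
        simp only [mul_zero] at h2
        convert h2 using 2 with k
        rw [hτ]
        ring
      have hτφtend : Filter.Tendsto (τ ∘ φ) Filter.atTop (nhds 0) :=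
        hτtend.comp hφ.tendsto_atTop
      have hdlim : dist w ylim = f w := by
        have hseq : Filter.Tendsto (fun k => dist w (Y (φ k))) Filter.atTop (nhds (dist w ylim)) :=
          tendsto_const_nhds.dist hconv'
        have hbound : ∀ k, |dist w (Y k) - f w| ≤ 2 * (τ k * ‖d‖) := by
          intro k
          have h1 : |dist w (Y k) - dist (w + τ k • d) (Y k)| ≤ dist w (w + τ k • d) :=
            abs_dist_sub_le _ _ _
          have h2 : dist w (w + τ k • d) = τ k * ‖d‖ := by
            rw [dist_eq_norm]
            have : w - (w + τ k • d) = -(τ k • d) := by module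
            rw [this, norm_neg, norm_smul, Real.norm_eq_abs, abs_of_pos (hτpos k)]
          have h3 : |f (w + τ k • d) - f w| ≤ τ k * ‖d‖ := by
            have := hlip (w + τ k • d) w
            have he : w + τ k • d - w = τ k • d := by module
            rw [he, norm_smul, Real.norm_eq_abs, abs_of_pos (hτpos k)] at this
            exact this
          have h4 : dist (w + τ k • d) (Y k) = f (w + τ k • d) := (hYdist k).symm
          rw [h2] at h1
          rw [h4] at h1
          calc |dist w (Y k) - f w|
              ≤ |dist w (Y k) - f (w + τ k • d)| + |f (w + τ k • d) - f w| := abs_sub_le _ _ _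
            _ ≤ τ k * ‖d‖ + τ k * ‖d‖ := add_le_add h1 h3
            _ = 2 * (τ k * ‖d‖) := by ring
        have hseq2 : Filter.Tendsto (fun k => dist w (Y (φ k))) Filter.atTop (nhds (f w)) := by
          have hz : Filter.Tendsto (fun k => 2 * (τ (φ k) * ‖d‖)) Filter.atTop (nhds 0) := by
            have := (hτφtend.mul_const ‖d‖).const_mul 2
            simpa using this
          apply tendsto_of_tendsto_of_tendsto_of_le_of_le
            (g := fun k => f w - 2 * (τ (φ k) * ‖d‖)) (h := fun k => f w + 2 * (τ (φ k) * ‖d‖))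
          · simpa using tendsto_const_nhds.sub hz
          · simpa using tendsto_const_nhds.add hz
          · intro k
            have h := hbound (φ k)
            rw [abs_le] at h
            dsimp only
            linarith [h.1]
          · intro k
            have h := hbound (φ k)
            rw [abs_le] at h
            dsimp only
            linarith [h.2]
        exact tendsto_nhds_unique hseq hseq2
      have hylim : ylim = y₀ := huniq ylim hylimΓ hdlim
      -- limit of the key inequality
      have hLtend : Filter.Tendsto (fun k => ⟪d, w - Y (φ k)⟫ / ‖w - Y (φ k)‖)
          Filter.atTop (nhds (⟪d, w - ylim⟫ / ‖w - ylim‖)) := by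
        have h1 : Filter.Tendsto (fun k => w - Y (φ k)) Filter.atTop (nhds (w - ylim)) :=
          tendsto_const_nhds.sub hconv'
        have h2 : Filter.Tendsto (fun k => ⟪d, w - Y (φ k)⟫) Filter.atTop (nhds ⟪d, w - ylim⟫) :=
          tendsto_const_nhds.inner h1
        have h3 : Filter.Tendsto (fun k => ‖w - Y (φ k)‖) Filter.atTop (nhds ‖w - ylim‖) :=
          h1.norm
        have hne0 : ‖w - ylim‖ ≠ 0 := by
          rw [← dist_eq_norm, hdlim]
          exact ne_of_gt hfw
        exact h2.div h3 hne0
      have hRtend : Filter.Tendsto (fun k => ⟪d, w - c⟫/lam + τ (φ k) * ‖d‖^2/(2*lam))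
          Filter.atTop (nhds (⟪d, w - c⟫/lam)) := by
        have h1 : Filter.Tendsto (fun k => τ (φ k) * ‖d‖^2/(2*lam)) Filter.atTop (nhds 0) := by
          have := (hτφtend.mul_const (‖d‖^2)).div_const (2*lam)
          simpa using this
        simpa using tendsto_const_nhds.add h1
      have hlim : ⟪d, w - ylim⟫ / ‖w - ylim‖ ≤ ⟪d, w - c⟫/lam :=
        le_of_tendsto_of_tendsto' hLtend hRtend (fun k => hkey (φ k))
      -- compute both sides
      have hLval : ⟪d, w - ylim⟫ / ‖w - ylim‖ = ⟪d, u⟫ := by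
        rw [hylim, ← hfwu0, real_inner_smul_right, norm_smul, Real.norm_eq_abs,
          abs_of_pos hfw, hunorm, mul_one, mul_comm, mul_div_assoc,
          div_self (ne_of_gt hfw), mul_one]
      have hRval : ⟪d, w - c⟫/lam = ⟪d, q⟫ := by
        rw [← hlambdaq, real_inner_smul_right, mul_comm, mul_div_assoc,
          div_self (ne_of_gt hl0), mul_one]
      rw [hLval, hRval] at hlim
      have hfinal2 : ⟪d, d⟫ ≤ 0 := by
        have : ⟪d, u⟫ - ⟪d, q⟫ = ⟪d, d⟫ := by
          rw [hd, inner_sub_right]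
        linarith
      rw [real_inner_self_eq_norm_sq] at hfinal2
      nlinarith
    -- then c is on the minimizing segment of w, so c has a unique footprint : contradiction
    have hcw : c = w - lam • u := by
      have h1 : lam • q = w - c := by
        rw [hq, smul_smul]; field_simp; rw [one_smul]
      rw [← hqu, h1]; module
    have hfwu : (f w) • u = w - y₀ := by
      rw [hu, smul_smul]; field_simp; rw [one_smul]
    have hfceq : f c = f w - lam := by
      apply le_antisymm
      · have h1 : f c ≤ dist c y₀ := infDist_le_dist_of_mem hy₀Γ
        have h2 : dist c y₀ = f w - lam := by
          rw [dist_eq_norm, hcw]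
          have h3 : w - lam • u - y₀ = (f w - lam) • u := by
            rw [sub_smul, hfwu]; module
          rw [h3, norm_smul, Real.norm_eq_abs, abs_of_pos (by linarith), hunorm, mul_one]
        linarith [h1, h2.le, h2.ge]
      · have h1 : f w ≤ f c + ‖w - c‖ := lipf (s := Γ) w c
        have h2 : ‖w - c‖ = lam := by
          rw [hcw]
          have : w - (w - lam • u) = lam • u := by module
          rw [this, norm_smul, Real.norm_eq_abs, abs_of_pos hl0, hunorm, mul_one]
        linarith
    -- every footprint of c equals y₀
    have hfp : ∀ z ∈ Γ, ‖c - z‖ = f c → z = y₀ := by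
      intro z hzΓ hz
      have h1 : f w ≤ ‖w - z‖ := by
        rw [← dist_eq_norm]; exact infDist_le_dist_of_mem hzΓ
      have h2 : w - z = (c - z) + lam • u := by rw [hcw]; module
      have h3 : ‖w - z‖^2 = ‖c - z‖^2 + 2*lam*⟪u, c - z⟫ + lam^2 := by
        have e := norm_add_sq_real (c - z) (lam • u)
        rw [h2, e, real_inner_smul_right, norm_smul, Real.norm_eq_abs, abs_of_pos hl0,
          hunorm, real_inner_comm]
        ring
      have hCS : ⟪u, c - z⟫ ≤ f w - lam := by
        calc ⟪u, c - z⟫ ≤ ‖u‖ * ‖c - z‖ := real_inner_le_norm u (c - z)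
          _ = f c := by rw [hunorm, one_mul, hz]
          _ = f w - lam := hfceq
      have hge : f w - lam ≤ ⟪u, c - z⟫ := by
        have : (f w)^2 ≤ ‖w - z‖^2 := by nlinarith [h1, norm_nonneg (w - z)]
        rw [h3] at this
        have hcz : ‖c - z‖ = f w - lam := by rw [hz, hfceq]
        rw [hcz] at this
        nlinarith
      have hinner : ⟪u, c - z⟫ = f w - lam := le_antisymm hCS hge
      have hfcpos : 0 < f c := by rw [hfceq]; linarith
      have hzero : ‖(c - z) - (f c) • u‖^2 = 0 := by
        have e := norm_sub_sq_real (c - z) ((f c) • u)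
        rw [e, real_inner_smul_right, norm_smul, Real.norm_eq_abs, abs_of_pos hfcpos,
          hunorm, real_inner_comm, hinner, hz, hfceq]
        ring
      have hcz2 : c - z = (f c) • u := by
        have := norm_eq_zero.mp (by nlinarith [norm_nonneg ((c - z) - (f c) • u), hzero] :
          ‖(c - z) - (f c) • u‖ = 0)
        have h5 : (c - z) - (f c) • u = 0 := this
        have := sub_eq_zero.mp h5
        exact this
      have : z = c - (f c) • u := by rw [← hcz2]; module
      rw [this, hfceq, hcw]
      have : w - lam • u - (f w - lam) • u = w - (f w) • u := by module
      rw [this, hfwu]; module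
    obtain ⟨a, haΓ, b, hbΓ, hab, hqa, hqb⟩ := hc
    exact hab ((hfp a haΓ hqa).trans (hfp b hbΓ hqb).symm)
  -- conclusions
  refine ⟨w, hwmed, hfcw, ?_, ?_⟩
  · have := lipf (s := Γ) w c
    linarith
  · -- the drift inequality, via concavity
    have hdrift : ∀ t : ℝ, 0 < t → t ≤ 1 →
        2*lam*(f x - f w) ≤ 2*⟪w - c, x - w⟫ + t*‖x - w‖^2 := by
      intro t ht0 ht1
      have hcombo := hconc w hwΩ x hxΩ t (le_of_lt ht0) ht1
      have hcomboΩ : (1 - t) • w + t • x ∈ Ω := hconv hwΩ hxΩ (by linarith) (le_of_lt ht0) (by ring)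
      have hp4' := hp4 _ hcomboΩ
      have hrw : (1 - t) • w + t • x - c = (w - c) + t • (x - w) := by module
      have hexp : ‖(1 - t) • w + t • x - c‖^2
          = ‖w - c‖^2 + 2*t*⟪w - c, x - w⟫ + t^2*‖x - w‖^2 := by
        rw [hrw, norm_add_sq_real, real_inner_smul_right, norm_smul, Real.norm_eq_abs,
          abs_of_pos ht0]
        ring
      rw [hexp] at hp4'
      have hnum : ‖w - c‖^2 + 2*t*⟪w - c, x - w⟫ + t^2*‖x - w‖^2 - ‖w - c‖^2
          = 2*t*⟪w - c, x - w⟫ + t^2*‖x - w‖^2 := by ring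
      rw [hnum] at hp4'
      have h2l : (0:ℝ) < 2*lam := by linarith
      have h5 : (f ((1 - t) • w + t • x) - f w) * (2*lam)
          ≤ 2*t*⟪w - c, x - w⟫ + t^2*‖x - w‖^2 := by
        rw [← le_div_iff₀ h2l]
        linarith
      have hcombo' : t * (f x - f w) ≤ f ((1 - t) • w + t • x) - f w := by nlinarith
      nlinarith [h5, hcombo', ht0, sq_nonneg t, mul_pos ht0 h2l]
    -- take t → 0
    by_contra hcon
    push_neg at hcon
    set A := ⟪w - c, x - w⟫ with hA
    set B := ‖x - w‖^2 with hB
    have hBnn : 0 ≤ B := by rw [hB]; positivity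
    have hgap : 0 < lam * (f x - f w) - A := by linarith
    set t := min 1 ((lam * (f x - f w) - A)/(B + 1)) with ht
    have ht0 : 0 < t := by
      apply lt_min one_pos
      positivity
    have ht1 : t ≤ 1 := min_le_left _ _
    have := hdrift t ht0 ht1
    have htB : t * B ≤ (lam * (f x - f w) - A) := by
      calc t * B ≤ ((lam * (f x - f w) - A)/(B + 1)) * B := by
            apply mul_le_mul_of_nonneg_right (min_le_right _ _) hBnn
        _ ≤ (lam * (f x - f w) - A)/(B + 1) * (B + 1) := by
            apply mul_le_mul_of_nonneg_left (by linarith) (by positivity)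
        _ = lam * (f x - f w) - A := by field_simp
    nlinarith [this, htB]


theorem main
    (n' : ℕ) (hn : 2 ≤ n') (Ω : Set (EuclideanSpace ℝ (Fin n')))
    (hcomp : IsCompact Ω) (hconv : Convex ℝ Ω) (hint : (interior Ω).Nonempty)
    (x : EuclideanSpace ℝ (Fin n')) (hx : x ∈ interior Ω)
    (x₀ : EuclideanSpace ℝ (Fin n')) (hx₀ : x₀ ∈ cutLocus (frontier Ω))
    (hnear : ‖x - x₀‖ = Metric.infDist x (cutLocus (frontier Ω)))
    (frontier_nonempty : (frontier Ω).Nonempty)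
    (heq : ∀ q ∈ Ω, infDist q (frontier Ω) = infDist q Ωᶜ)
    (hconc : ∀ a ∈ Ω, ∀ b ∈ Ω, ∀ t : ℝ, 0 ≤ t → t ≤ 1 →
      (1 - t) * infDist a (frontier Ω) + t * infDist b (frontier Ω)
        ≤ infDist ((1 - t) • a + t • b) (frontier Ω))
    (hmedsub : ∀ q ∈ medialAxis (frontier Ω), q ∈ Ω ∧ 0 < infDist q (frontier Ω))
    (prox_step : ∀ (x c : EuclideanSpace ℝ (Fin n')), x ∈ Ω → c ∈ medialAxis (frontier Ω) →
      ∀ lam : ℝ, 0 < lam → lam < infDist c (frontier Ω) →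
      ∃ c' ∈ medialAxis (frontier Ω),
        infDist c (frontier Ω) ≤ infDist c' (frontier Ω) ∧
        infDist c' (frontier Ω) ≤ infDist c (frontier Ω) + 2*lam ∧
        lam * (infDist x (frontier Ω) - infDist c' (frontier Ω)) ≤ ⟪c' - c, x - c'⟫) :
    Metric.infDist x (frontier Ω) ≤ Metric.infDist x₀ (frontier Ω) := by
  classical
  set Γ := frontier Ω with hΓdef
  set f : EuclideanSpace ℝ (Fin n') → ℝ := fun q => infDist q Γ with hfdef
  by_contra hcon
  push_neg at hcon
  -- notation
  set R := f x₀ with hR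
  set δ := (f x - R)/2 with hδdef
  have hδpos : 0 < δ := by
    rw [hδdef]
    simp only [hR, hfdef]
    linarith [hcon]
  have hfx : f x = R + 2*δ := by rw [hδdef]; ring
  set ρ := ‖x - x₀‖ with hρdef
  have hxΩ : x ∈ Ω := interior_subset hx
  -- trivial case ρ = 0
  by_cases hρ0 : ρ = 0
  · have : x = x₀ := by
      have := norm_sub_eq_zero_iff.mp hρ0
      exact this
    rw [this] at hcon
    exact absurd hcon (lt_irrefl _)
  have hρpos : 0 < ρ := lt_of_le_of_ne (norm_nonneg _) (Ne.symm hρ0)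
  -- choose ε and the starting medial point
  set ε := min ρ (min (δ/4) (δ^2/(12*ρ))) with hεdef
  have hεpos : 0 < ε := by
    apply lt_min hρpos
    apply lt_min (by linarith)
    positivity
  have hερ : ε ≤ ρ := min_le_left _ _
  have hεδ : ε ≤ δ/4 := le_trans (min_le_right _ _) (min_le_left _ _)
  have hEK : ε ≤ δ^2/(12*ρ) := le_trans (min_le_right _ _) (min_le_right _ _)
  obtain ⟨m₀, hm₀med, hm₀close⟩ : ∃ m ∈ medialAxis Γ, dist x₀ m < ε :=
    Metric.mem_closure_iff.mp hx₀ ε hεpos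
  obtain ⟨hm₀Ω, hfm₀pos⟩ := hmedsub m₀ hm₀med
  have hm₀f : f m₀ ≤ R + ε := by
    have h1 := lipf (s := Γ) m₀ x₀
    have h2 : ‖m₀ - x₀‖ = dist x₀ m₀ := by rw [dist_eq_norm, norm_sub_rev]
    simp only [hfdef, hR] at *
    rw [h2] at h1
    linarith
  set lam := min (δ/8) (f m₀/2) with hlamdef
  have hlam0 : 0 < lam := lt_min (by linarith) (by linarith [hfm₀pos])
  have hlamδ : lam ≤ δ/8 := min_le_left _ _
  have hlamf : lam ≤ f m₀/2 := min_le_right _ _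
  -- all medial points are at distance ≥ ρ from x
  have hmin : ∀ z ∈ medialAxis Γ, ρ ≤ ‖x - z‖ := by
    intro z hz
    have h1 : infDist x (cutLocus Γ) ≤ dist x z :=
      infDist_le_dist_of_mem (subset_closure hz)
    rw [dist_eq_norm] at h1
    rw [hnear]
    exact h1
  have hd₀ : ‖x - m₀‖ ≤ ρ + ε := by
    have h1 : x - m₀ = (x - x₀) + (x₀ - m₀) := by module
    have h2 : ‖x₀ - m₀‖ = dist x₀ m₀ := (dist_eq_norm _ _).symm
    calc ‖x - m₀‖ = ‖(x - x₀) + (x₀ - m₀)‖ := by rw [h1]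
      _ ≤ ‖x - x₀‖ + ‖x₀ - m₀‖ := norm_add_le _ _
      _ ≤ ρ + ε := by rw [h2]; exact add_le_add (le_of_eq rfl) (le_of_lt hm₀close)
  -- the iteration step as a total function
  have hstep_tot : ∀ c : EuclideanSpace ℝ (Fin n'), ∃ c',
      (c ∈ medialAxis Γ ∧ f m₀ ≤ f c) →
      (c' ∈ medialAxis Γ ∧ f m₀ ≤ f c' ∧ f c ≤ f c' ∧ f c' ≤ f c + 2*lam ∧
        lam * (f x - f c') ≤ ⟪c' - c, x - c'⟫) := by
    intro c
    by_cases hc : c ∈ medialAxis Γ ∧ f m₀ ≤ f c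
    · have hlamc : lam < f c := lt_of_le_of_lt hlamf (lt_of_lt_of_le (by linarith) hc.2)
      obtain ⟨c', hc'med, h1, h2, h3⟩ := prox_step x c hxΩ hc.1 lam hlam0 hlamc
      exact ⟨c', fun _ => ⟨hc'med, le_trans hc.2 h1, h1, h2, h3⟩⟩
    · exact ⟨c, fun h => absurd h hc⟩
  choose next hnext using hstep_tot
  set M : ℕ → EuclideanSpace ℝ (Fin n') := fun k => next^[k] m₀ with hM
  have hM0 : M 0 = m₀ := rfl
  have hMsucc : ∀ k, M (k+1) = next (M k) := by
    intro k
    rw [hM]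
    exact Function.iterate_succ_apply' next k m₀
  -- invariant
  have hInv : ∀ k, M k ∈ medialAxis Γ ∧ f m₀ ≤ f (M k) := by
    intro k
    induction k with
    | zero => exact ⟨hm₀med, le_refl _⟩
    | succ k ih =>
      rw [hMsucc k]
      obtain ⟨h1, h2, _, _, _⟩ := hnext (M k) ih
      exact ⟨h1, h2⟩
  have hmono : ∀ k, f (M k) ≤ f (M (k+1)) := by
    intro k
    rw [hMsucc k]
    exact (hnext (M k) (hInv k)).2.2.1
  have hgain : ∀ k, f (M (k+1)) ≤ f (M k) + 2*lam := by
    intro k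
    rw [hMsucc k]
    exact (hnext (M k) (hInv k)).2.2.2.1
  have hdrift : ∀ k, lam * (f x - f (M (k+1))) ≤ ⟪M (k+1) - M k, x - M (k+1)⟫ := by
    intro k
    conv_lhs => rw [hMsucc k]
    conv_rhs => rw [hMsucc k]
    exact (hnext (M k) (hInv k)).2.2.2.2
  have hfbound : ∀ k, f (M k) ≤ f m₀ + 2*lam*k := by
    intro k
    induction k with
    | zero => simp [hM0]
    | succ k ih =>
      have := hgain k
      push_cast
      push_cast at ih
      linarith
  -- descent of the distance to x as long as f stays below the threshold
  have hdesc : ∀ k, f (M (k+1)) ≤ f x - δ → ‖x - M (k+1)‖^2 ≤ ‖x - M k‖^2 - 2*lam*δ := by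
    intro k hth
    have h1 := hdrift k
    have h2 : lam * δ ≤ ⟪M (k+1) - M k, x - M (k+1)⟫ := by
      have : lam * δ ≤ lam * (f x - f (M (k+1))) := by
        apply mul_le_mul_of_nonneg_left _ (le_of_lt hlam0)
        linarith
      linarith
    have hexp : ‖x - M k‖^2 = ‖x - M (k+1)‖^2 + 2*⟪M (k+1) - M k, x - M (k+1)⟫
        + ‖M (k+1) - M k‖^2 := by
      have hrw : x - M k = (x - M (k+1)) + (M (k+1) - M k) := by module
      rw [hrw, norm_add_sq_real, real_inner_comm]
      try ring
    nlinarith [sq_nonneg ‖M (k+1) - M k‖, hexp, h2]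
  have hB : ∀ k, f (M k) ≤ f x - δ → ‖x - M k‖^2 ≤ (ρ + ε)^2 - 2*lam*δ*k := by
    intro k
    induction k with
    | zero =>
      intro _
      simp only [hM0]
      push_cast
      nlinarith [hd₀, norm_nonneg (x - m₀)]
    | succ k ih =>
      intro hth
      have hthk : f (M k) ≤ f x - δ := le_trans (hmono k) hth
      have h1 := ih hthk
      have h2 := hdesc k hth
      push_cast
      push_cast at h1
      linarith
  -- the threshold must be crossed
  have hcross : ∃ k, f x - δ < f (M k) := by
    by_contra hall
    push_neg at hall
    obtain ⟨k, hk⟩ := exists_nat_gt (((ρ + ε)^2 - ρ^2)/(2*lam*δ))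
    have h1 := hB k (hall k)
    have h2 : ρ ≤ ‖x - M k‖ := hmin (M k) (hInv k).1
    have h3 : ρ^2 ≤ ‖x - M k‖^2 := by nlinarith [norm_nonneg (x - M k)]
    have h4 : ((ρ + ε)^2 - ρ^2)/(2*lam*δ) < k := hk
    rw [div_lt_iff₀ (by positivity)] at h4
    nlinarith
  set k₀ := Nat.find hcross with hk₀def
  have hk₀ : f x - δ < f (M k₀) := Nat.find_spec hcross
  have hk₀pos : k₀ ≠ 0 := by
    intro h0
    rw [h0, hM0] at hk₀
    have : f m₀ ≤ R + ε := hm₀f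
    rw [hfx] at hk₀
    linarith
  obtain ⟨j, hj⟩ : ∃ j, k₀ = j + 1 := ⟨k₀ - 1, (Nat.succ_pred_eq_of_pos (Nat.pos_of_ne_zero hk₀pos)).symm⟩
  have hjlt : j < k₀ := by omega
  have hjth : ¬ (f x - δ < f (M j)) := Nat.find_min hcross hjlt
  push_neg at hjth
  have hjB := hB j hjth
  have hjρ : ρ ≤ ‖x - M j‖ := hmin (M j) (hInv j).1
  have hjρ2 : ρ^2 ≤ ‖x - M j‖^2 := by nlinarith [norm_nonneg (x - M j)]
  -- j is bounded
  have hjbound : 2*lam*δ*j ≤ 3*ρ*ε := by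
    have h1 : (ρ + ε)^2 - ρ^2 ≤ 3*ρ*ε := by nlinarith [hερ, hεpos]
    nlinarith [hjB, hjρ2]
  -- final contradiction
  have hfk₀ : f (M k₀) ≤ f m₀ + 2*lam*k₀ := hfbound k₀
  have hk₀j : (k₀ : ℝ) = (j : ℝ) + 1 := by exact_mod_cast congrArg Nat.cast hj
  have h2lamj : 2*lam*(j:ℝ) ≤ 3*ρ*ε/δ := by
    rw [le_div_iff₀ hδpos]
    nlinarith [hjbound]
  have hεbound : 3*ρ*ε/δ ≤ δ/4 := by
    rw [div_le_iff₀ hδpos]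
    have h1 : ε ≤ δ^2/(12*ρ) := hEK
    rw [le_div_iff₀ (by positivity)] at h1
    nlinarith
  have h2lamj' : 2*lam*(j:ℝ) ≤ δ/4 := le_trans h2lamj hεbound
  have : f x - δ < (R + ε) + (δ/4 + 2*lam) := by
    calc f x - δ < f (M k₀) := hk₀
      _ ≤ f m₀ + 2*lam*k₀ := hfk₀
      _ = f m₀ + 2*lam*(j:ℝ) + 2*lam := by rw [hk₀j]; ring
      _ ≤ (R + ε) + (δ/4 + 2*lam) := by linarith [hm₀f, h2lamj']
  rw [hfx] at this
  linarith [hεδ, hlamδ]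


end CutProofAux

/-- Let `Ω ⊆ ℝⁿ` (`n ≥ 2`) be a compact convex set with nonempty interior
and boundary `Γ = ∂Ω`.  If `x` is an interior point of `Ω` and `x⁰` is a nearest point of
`x` on `cut(Γ)`, then `d_Γ(x⁰) ≥ d_Γ(x)`. -/
theorem footprint_on_cut_locus_farther_from_boundary
    (n : ℕ) (hn : 2 ≤ n) (Ω : Set (EuclideanSpace ℝ (Fin n)))
    (hcomp : IsCompact Ω) (hconv : Convex ℝ Ω) (hint : (interior Ω).Nonempty)
    (x : EuclideanSpace ℝ (Fin n)) (hx : x ∈ interior Ω)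
    (x₀ : EuclideanSpace ℝ (Fin n)) (hx₀ : x₀ ∈ cutLocus (frontier Ω))
    (hnear : ‖x - x₀‖ = Metric.infDist x (cutLocus (frontier Ω))) :
    Metric.infDist x (frontier Ω) ≤ Metric.infDist x₀ (frontier Ω) := by
  classical
  have hΩcl : IsClosed Ω := hcomp.isClosed
  have hΓne : (frontier Ω).Nonempty := CutProofAux.frontier_nonempty hn hcomp hint
  have hΩne : Ω.Nonempty := ⟨x, interior_subset hx⟩
  haveI hnt : Nontrivial (EuclideanSpace ℝ (Fin n)) := by
    refine ⟨0, EuclideanSpace.single ⟨0, by omega⟩ 1, ?_⟩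
    intro h
    have := congrFun (congrArg (fun v : EuclideanSpace ℝ (Fin n) => (v : Fin n → ℝ)) h) ⟨0, by omega⟩
    simp [EuclideanSpace.single_apply] at this
  have hcne : Ωᶜ.Nonempty := Set.nonempty_compl.mpr hcomp.ne_univ
  have heq : ∀ q ∈ Ω, Metric.infDist q (frontier Ω) = Metric.infDist q Ωᶜ :=
    fun q hq => CutProofAux.infDist_frontier_eq_compl hΩcl hΓne hcne hq
  have hconc : ∀ a ∈ Ω, ∀ b ∈ Ω, ∀ t : ℝ, 0 ≤ t → t ≤ 1 →
      (1 - t) * Metric.infDist a (frontier Ω) + t * Metric.infDist b (frontier Ω)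
        ≤ Metric.infDist ((1 - t) • a + t • b) (frontier Ω) :=
    fun a ha b hb t ht0 ht1 => CutProofAux.concave_f hconv hΩcl hΓne hcne heq ha hb ht0 ht1
  have hmedsub : ∀ q ∈ medialAxis (frontier Ω), q ∈ Ω ∧ 0 < Metric.infDist q (frontier Ω) :=
    fun q hq => CutProofAux.medial_sub hcomp hconv hΓne hq
  have hprox : ∀ (y c : EuclideanSpace ℝ (Fin n)), y ∈ Ω → c ∈ medialAxis (frontier Ω) →
      ∀ lam : ℝ, 0 < lam → lam < Metric.infDist c (frontier Ω) →
      ∃ c' ∈ medialAxis (frontier Ω),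
        Metric.infDist c (frontier Ω) ≤ Metric.infDist c' (frontier Ω) ∧
        Metric.infDist c' (frontier Ω) ≤ Metric.infDist c (frontier Ω) + 2*lam ∧
        lam * (Metric.infDist y (frontier Ω) - Metric.infDist c' (frontier Ω))
          ≤ ⟪c' - c, y - c'⟫ :=
    fun y c hy hc lam h0 hlf =>
      CutProofAux.prox_step hcomp hconv hΓne hcne hΩne heq hconc hmedsub hy hc h0 hlf
  exact CutProofAux.main n hn Ω hcomp hconv hint x hx x₀ hx₀ hnear hΓne heq hconc hmedsub hprox
end
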